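/- arXiv:2002.09312 — 4 statements merged into one kernel-verified Lean document; each statement's English description precedes it below -/
import Mathlib

section
/- For every Schwartz function f on ℝ⁴ and every natural number k there exists a constant C_k > 0 such that for all m ≥ 0, the inner Källén–Lehmann integral satisfies ∫_{ℝ³} |f̂(√(|p|²+m²), p)| / √(|p|²+m²) dp ≤ C_k (1+m²)^{-k}; in particular this integral is finite for every m ≥ 0. -/
open MeasureTheory Filter Topology SchwartzMap
open scoped FourierTransform

/-- The point `(p₀, p) ∈ ℝ⁴` built from a time component `p0 ∈ ℝ` and a
space momentum `p ∈ ℝ³`. -/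
noncomputable def timeSpace (p0 : ℝ) (p : EuclideanSpace ℝ (Fin 3)) :
    EuclideanSpace ℝ (Fin 4) :=
  (EuclideanSpace.equiv (Fin 4) ℝ).symm (Fin.cons p0 (EuclideanSpace.equiv (Fin 3) ℝ p))

/-- The inner Källén–Lehmann momentum integral
`∫_{ℝ³} f̂(√(|p|²+m²), p)/√(|p|²+m²) dp` at squared mass `m2 = m²`,
where `f̂ = 𝓕 f` is the Fourier transform of `f`. -/
noncomputable def KLinner (f : EuclideanSpace ℝ (Fin 4) → ℂ) (m2 : ℝ) : ℂ :=
  ∫ p : EuclideanSpace ℝ (Fin 3),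
    𝓕 f (timeSpace (Real.sqrt (‖p‖ ^ 2 + m2)) p) / (Real.sqrt (‖p‖ ^ 2 + m2) : ℂ)

/-- The Källén–Lehmann two-point functional
`W_ρ(f) = ∫_{[0,∞)} (∫_{ℝ³} f̂(√(|p|²+m²), p)/√(|p|²+m²) dp) dρ(m²)`
associated with a spectral measure `ρ` on `[0,∞)`. -/
noncomputable def KL (ρ : Measure ℝ) (f : EuclideanSpace ℝ (Fin 4) → ℂ) : ℂ :=
  ∫ m2 in Set.Ici (0 : ℝ), KLinner f m2 ∂ρ

/-- The scaled Källén–Lehmann functional `W_{ρ,λ}(f) = λ⁻⁴ W_ρ(f(λ⁻¹ ·))`. -/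
noncomputable def KLscaled (ρ : Measure ℝ) (lam : ℝ) (f : EuclideanSpace ℝ (Fin 4) → ℂ) : ℂ :=
  (lam ^ (4 : ℕ) : ℝ)⁻¹ * KL ρ (fun x => f (lam⁻¹ • x))

/-- 1-D weight. -/
noncomputable def klW (t : ℝ) : ℝ := |t| ^ (-(1/3) : ℝ) * (1 + |t|) ^ (-(5/3) : ℝ)

lemma klW_nonneg (t : ℝ) : 0 ≤ klW t :=
  mul_nonneg (Real.rpow_nonneg (abs_nonneg t) _) (Real.rpow_nonneg (by positivity) _)

lemma klW_pos {t : ℝ} (ht : t ≠ 0) : 0 < klW t :=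
  mul_pos (Real.rpow_pos_of_pos (abs_pos.2 ht) _) (Real.rpow_pos_of_pos (by positivity) _)

lemma klW_measurable : Measurable klW := by unfold klW; fun_prop

lemma klW_neg (t : ℝ) : klW (-t) = klW t := by simp [klW, abs_neg]

lemma klW_integrable : Integrable klW := by
  have h01 : IntegrableOn (fun t : ℝ => t ^ (-(1/3) : ℝ)) (Set.Ioc 0 1) := by
    have h := intervalIntegral.intervalIntegrable_rpow' (a := 0) (b := 1)
      (r := -(1/3)) (by norm_num)
    rwa [intervalIntegrable_iff_integrableOn_Ioc_of_le zero_le_one] at h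
  have h2 : IntegrableOn klW (Set.Ioc 0 1) := by
    refine h01.mono' klW_measurable.aestronglyMeasurable.restrict ?_
    filter_upwards [ae_restrict_mem measurableSet_Ioc] with t ht
    rw [Real.norm_eq_abs, abs_of_nonneg (klW_nonneg t)]
    have h5 : (1 + |t|) ^ (-(5/3) : ℝ) ≤ 1 :=
      Real.rpow_le_one_of_one_le_of_nonpos (by linarith [abs_nonneg t]) (by norm_num)
    calc klW t ≤ |t| ^ (-(1/3) : ℝ) * 1 :=
          mul_le_mul_of_nonneg_left h5 (Real.rpow_nonneg (abs_nonneg t) _)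
      _ = t ^ (-(1/3) : ℝ) := by rw [mul_one, abs_of_pos ht.1]
  have hIoi1 : IntegrableOn klW (Set.Ioi 1) := by
    have hint : Integrable (fun t : ℝ => (1 + ‖t‖) ^ (-(5/3) : ℝ)) :=
      integrable_one_add_norm (by norm_num)
    refine hint.integrableOn.mono' klW_measurable.aestronglyMeasurable.restrict ?_
    filter_upwards [ae_restrict_mem measurableSet_Ioi] with t ht
    rw [Real.norm_eq_abs, abs_of_nonneg (klW_nonneg t)]
    have h1 : (1:ℝ) ≤ |t| := le_trans ht.le (le_abs_self t)
    have h3 : |t| ^ (-(1/3) : ℝ) ≤ 1 := Real.rpow_le_one_of_one_le_of_nonpos h1 (by norm_num)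
    calc klW t ≤ 1 * (1 + |t|) ^ (-(5/3) : ℝ) :=
          mul_le_mul_of_nonneg_right h3 (Real.rpow_nonneg (by positivity) _)
      _ = (1 + ‖t‖) ^ (-(5/3) : ℝ) := by rw [one_mul, Real.norm_eq_abs]
  have hpos : IntegrableOn klW (Set.Ioi 0) := by
    rw [← Set.Ioc_union_Ioi_eq_Ioi zero_le_one]
    exact h2.union hIoi1
  have hind : Integrable ((Set.Ioi (0:ℝ)).indicator klW) :=
    (integrable_indicator_iff measurableSet_Ioi).2 hpos
  have hind2 : Integrable ((Set.Iio (0:ℝ)).indicator klW) := by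
    refine hind.comp_neg.congr (Filter.Eventually.of_forall fun t => ?_)
    simp only [Set.indicator_apply, Set.mem_Ioi, Set.mem_Iio, klW_neg, neg_pos]
  have h0 : ∀ᵐ t : ℝ ∂volume, t ≠ 0 := by
    rw [ae_iff]
    simp only [not_not, Set.setOf_eq_eq_singleton]
    exact measure_singleton 0
  refine (hind.add hind2).congr ?_
  filter_upwards [h0] with t ht
  simp only [Pi.add_apply, Set.indicator_apply, Set.mem_Ioi, Set.mem_Iio]
  rcases lt_or_gt_of_ne ht with h | h
  · rw [if_neg (by linarith), if_pos h, zero_add]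
  · rw [if_pos h, if_neg (by linarith), add_zero]

lemma klW3_integrable : Integrable (fun p : EuclideanSpace ℝ (Fin 3) => ∏ i, klW (p i)) := by
  have hvp := EuclideanSpace.volume_preserving_symm_measurableEquiv_toLp (Fin 3)
  rw [← ((MeasurePreserving.symm _ hvp).integrable_comp_emb (MeasurableEquiv.measurableEmbedding _))]
  exact Integrable.fintype_prod (fun _ => klW_integrable)

lemma euclid_coord_le {n : ℕ} (p : EuclideanSpace ℝ (Fin n)) (i : Fin n) : |p i| ≤ ‖p‖ := by
  rw [EuclideanSpace.norm_eq, ← Real.sqrt_sq_eq_abs]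
  apply Real.sqrt_le_sqrt
  have := Finset.single_le_sum (f := fun j => ‖p j‖ ^ 2) (fun j _ => sq_nonneg ‖p j‖)
    (Finset.mem_univ i)
  simpa [Real.norm_eq_abs, sq_abs] using this

lemma timeSpace_norm (a : ℝ) (p : EuclideanSpace ℝ (Fin 3)) :
    ‖timeSpace a p‖ = Real.sqrt (a ^ 2 + ‖p‖ ^ 2) := by
  rw [EuclideanSpace.norm_eq]
  congr 1
  have hp : ∀ i : Fin 3, (timeSpace a p) i.succ = p i := fun i => rfl
  have h0 : (timeSpace a p) 0 = a := rfl
  rw [Fin.sum_univ_succ, h0]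
  congr 1
  · rw [Real.norm_eq_abs, sq_abs]
  · have : ‖p‖ ^ 2 = ∑ i : Fin 3, ‖p i‖ ^ 2 := by
      rw [EuclideanSpace.norm_eq, Real.sq_sqrt (Finset.sum_nonneg fun j _ => sq_nonneg _)]
    rw [this]
    exact Finset.sum_congr rfl fun i _ => by rw [hp]

lemma euclid_coord_ae_ne (i : Fin 3) :
    ∀ᵐ p : EuclideanSpace ℝ (Fin 3), p i ≠ 0 := by
  have hvp := EuclideanSpace.volume_preserving_symm_measurableEquiv_toLp (Fin 3)
  rw [ae_iff]
  have : {p : EuclideanSpace ℝ (Fin 3) | ¬ p i ≠ 0}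
      = (MeasurableEquiv.toLp 2 (Fin 3 → ℝ)).symm ⁻¹' {x : Fin 3 → ℝ | x i = 0} := by
    ext p; simp
  rw [this, hvp.measure_preimage_equiv]
  exact Measure.pi_hyperplane _ i 0

lemma schwartz_bound (g : 𝓢(EuclideanSpace ℝ (Fin 4), ℂ)) (N : ℕ) :
    ∃ C : ℝ, 0 ≤ C ∧ ∀ x, (1 + ‖x‖) ^ N * ‖g x‖ ≤ C := by
  refine ⟨2 ^ N * (Finset.Iic (N, 0)).sup (fun m' => SchwartzMap.seminorm ℝ m'.1 m'.2) g,
    mul_nonneg (by positivity) (apply_nonneg _ _), fun x => ?_⟩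
  have := SchwartzMap.one_add_le_sup_seminorm_apply (𝕜 := ℝ) (m := (N, 0)) le_rfl le_rfl g x
  simpa [norm_iteratedFDeriv_zero] using this

lemma klW_prod_inv_le {p : EuclideanSpace ℝ (Fin 3)} (hp : ∀ i, p i ≠ 0) :
    ∏ i : Fin 3, (klW (p i))⁻¹ ≤ ‖p‖ * (1 + ‖p‖) ^ 5 := by
  have hterm : ∀ i : Fin 3, (klW (p i))⁻¹ ≤ ‖p‖ ^ ((1:ℝ)/3) * (1 + ‖p‖) ^ ((5:ℝ)/3) := by
    intro i
    have hinv : (klW (p i))⁻¹ = |p i| ^ ((1:ℝ)/3) * (1 + |p i|) ^ ((5:ℝ)/3) := by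
      rw [klW, mul_inv, ← Real.rpow_neg (abs_nonneg _), ← Real.rpow_neg (by positivity)]
      norm_num
    rw [hinv]
    have h1 : |p i| ^ ((1:ℝ)/3) ≤ ‖p‖ ^ ((1:ℝ)/3) :=
      Real.rpow_le_rpow (abs_nonneg _) (euclid_coord_le p i) (by norm_num)
    have h2 : (1 + |p i|) ^ ((5:ℝ)/3) ≤ (1 + ‖p‖) ^ ((5:ℝ)/3) :=
      Real.rpow_le_rpow (by positivity) (by linarith [euclid_coord_le p i]) (by norm_num)
    exact mul_le_mul h1 h2 (Real.rpow_nonneg (by positivity) _)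
      (Real.rpow_nonneg (norm_nonneg _) _)
  calc ∏ i : Fin 3, (klW (p i))⁻¹
      ≤ ∏ _i : Fin 3, ‖p‖ ^ ((1:ℝ)/3) * (1 + ‖p‖) ^ ((5:ℝ)/3) :=
        Finset.prod_le_prod (fun i _ => inv_nonneg.2 (klW_pos (hp i)).le) (fun i _ => hterm i)
    _ = (‖p‖ ^ ((1:ℝ)/3)) ^ (3:ℕ) * ((1 + ‖p‖) ^ ((5:ℝ)/3)) ^ (3:ℕ) := by
        rw [Finset.prod_const, mul_pow]; simp
    _ = ‖p‖ * (1 + ‖p‖) ^ 5 := by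
        rw [← Real.rpow_natCast (‖p‖ ^ ((1:ℝ)/3)) 3,
          ← Real.rpow_natCast ((1 + ‖p‖) ^ ((5:ℝ)/3)) 3,
          ← Real.rpow_mul (norm_nonneg _), ← Real.rpow_mul (by positivity)]
        norm_num

lemma kl_star (k : ℕ) {m : ℝ} (hm : 0 ≤ m) {p : EuclideanSpace ℝ (Fin 3)}
    (hp : ∀ i, p i ≠ 0) :
    (1 + m ^ 2) ^ k * ∏ i : Fin 3, (klW (p i))⁻¹
      ≤ (1 + ‖timeSpace (Real.sqrt (‖p‖ ^ 2 + m ^ 2)) p‖) ^ (2 * k + 5)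
        * Real.sqrt (‖p‖ ^ 2 + m ^ 2) := by
  have hp0 : 0 < ‖p‖ := norm_pos_iff.2 fun h => hp 0 (by simp [h])
  set s : ℝ := Real.sqrt (‖p‖ ^ 2 + m ^ 2) with hs
  have hps : ‖p‖ ≤ s := Real.le_sqrt_of_sq_le (by nlinarith)
  have hms : m ≤ s := Real.le_sqrt_of_sq_le (by nlinarith)
  have hs0 : 0 < s := lt_of_lt_of_le hp0 hps
  have hsx : s ≤ ‖timeSpace s p‖ := by
    rw [timeSpace_norm]
    exact Real.le_sqrt_of_sq_le (by nlinarith [sq_nonneg ‖p‖])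
  set X : ℝ := ‖timeSpace s p‖ with hX
  have hpx : ‖p‖ ≤ X := le_trans hps hsx
  have hmx : m ≤ X := le_trans hms hsx
  have hX0 : 0 ≤ X := norm_nonneg _
  have e1 : (1 + m ^ 2) ^ k ≤ (1 + X) ^ (2 * k) := by
    calc (1 + m ^ 2) ^ k ≤ ((1 + m) ^ 2) ^ k :=
          pow_le_pow_left₀ (by positivity) (by nlinarith) k
      _ = (1 + m) ^ (2 * k) := by rw [← pow_mul, mul_comm]
      _ ≤ (1 + X) ^ (2 * k) := pow_le_pow_left₀ (by positivity) (by linarith) _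
  have e2 : ‖p‖ * (1 + ‖p‖) ^ 5 ≤ s * (1 + X) ^ 5 :=
    mul_le_mul hps (pow_le_pow_left₀ (by positivity) (by linarith) 5) (by positivity) hs0.le
  calc (1 + m ^ 2) ^ k * ∏ i : Fin 3, (klW (p i))⁻¹
      ≤ (1 + X) ^ (2 * k) * (s * (1 + X) ^ 5) := by
        refine mul_le_mul e1 (le_trans (klW_prod_inv_le hp) e2) ?_ (by positivity)
        exact Finset.prod_nonneg fun i _ => inv_nonneg.2 (klW_pos (hp i)).le
    _ = (1 + X) ^ (2 * k + 5) * s := by rw [pow_add]; ring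

/-- For every Schwartz `f` on ℝ⁴ and every `k : ℕ` there is `C > 0` such that
for all `m ≥ 0` the inner Källén–Lehmann integral of `|f̂|` is finite and bounded by
`C (1+m²)^{-k}`. -/
theorem kl_inner_decay (f : 𝓢(EuclideanSpace ℝ (Fin 4), ℂ)) (k : ℕ) :
    ∃ C : ℝ, 0 < C ∧ ∀ m : ℝ, 0 ≤ m →
      Integrable (fun p : EuclideanSpace ℝ (Fin 3) =>
        ‖𝓕 (⇑f) (timeSpace (Real.sqrt (‖p‖ ^ 2 + m ^ 2)) p)‖ / Real.sqrt (‖p‖ ^ 2 + m ^ 2)) ∧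
      (∫ p : EuclideanSpace ℝ (Fin 3),
          ‖𝓕 (⇑f) (timeSpace (Real.sqrt (‖p‖ ^ 2 + m ^ 2)) p)‖ / Real.sqrt (‖p‖ ^ 2 + m ^ 2))
        ≤ C * (1 + m ^ 2) ^ (-(k : ℝ)) := by
  classical
  obtain ⟨C₀, hC₀0, hsem⟩ := schwartz_bound (SchwartzMap.fourierTransformCLM ℂ f) (2 * k + 5)
  have hgf : 𝓕 (⇑f) = ⇑(SchwartzMap.fourierTransformCLM ℂ f) := rfl
  set I : ℝ := ∫ p : EuclideanSpace ℝ (Fin 3), ∏ i, klW (p i) with hI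
  have hI0 : 0 ≤ I := integral_nonneg fun p => Finset.prod_nonneg fun i _ => klW_nonneg _
  refine ⟨(C₀ + 1) * (I + 1), by positivity, fun m hm => ?_⟩
  set B : ℝ := (1 + m ^ 2) ^ (-(k : ℝ)) with hBdef
  have h1m : (0:ℝ) < 1 + m ^ 2 := by positivity
  have hB0 : 0 < B := Real.rpow_pos_of_pos h1m _
  have hBval : B = ((1 + m ^ 2) ^ k)⁻¹ := by
    rw [hBdef, ← Real.rpow_natCast (1 + m ^ 2) k, ← Real.rpow_neg h1m.le]
  have hae : ∀ᵐ p : EuclideanSpace ℝ (Fin 3),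
      ‖𝓕 (⇑f) (timeSpace (Real.sqrt (‖p‖ ^ 2 + m ^ 2)) p)‖ / Real.sqrt (‖p‖ ^ 2 + m ^ 2)
        ≤ (C₀ * B) * ∏ i, klW (p i) := by
    have hall : ∀ᵐ p : EuclideanSpace ℝ (Fin 3), ∀ i, p i ≠ 0 :=
      (MeasureTheory.ae_all_iff).2 euclid_coord_ae_ne
    filter_upwards [hall] with p hp
    have hp0 : 0 < ‖p‖ := norm_pos_iff.2 fun h => hp 0 (by simp [h])
    have hps : ‖p‖ ≤ Real.sqrt (‖p‖ ^ 2 + m ^ 2) := Real.le_sqrt_of_sq_le (by nlinarith)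
    have hs0 : 0 < Real.sqrt (‖p‖ ^ 2 + m ^ 2) := lt_of_lt_of_le hp0 hps
    have hLpos : 0 < (1 + m ^ 2) ^ k * ∏ i : Fin 3, (klW (p i))⁻¹ :=
      mul_pos (by positivity) (Finset.prod_pos fun i _ => inv_pos.2 (klW_pos (hp i)))
    have hstar := kl_star k hm hp
    have hgx : ‖(SchwartzMap.fourierTransformCLM ℂ f)
        (timeSpace (Real.sqrt (‖p‖ ^ 2 + m ^ 2)) p)‖
          ≤ C₀ / (1 + ‖timeSpace (Real.sqrt (‖p‖ ^ 2 + m ^ 2)) p‖) ^ (2 * k + 5) := by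
      rw [le_div_iff₀ (by positivity)]
      calc ‖(SchwartzMap.fourierTransformCLM ℂ f)
            (timeSpace (Real.sqrt (‖p‖ ^ 2 + m ^ 2)) p)‖
              * (1 + ‖timeSpace (Real.sqrt (‖p‖ ^ 2 + m ^ 2)) p‖) ^ (2 * k + 5)
          = (1 + ‖timeSpace (Real.sqrt (‖p‖ ^ 2 + m ^ 2)) p‖) ^ (2 * k + 5)
              * ‖(SchwartzMap.fourierTransformCLM ℂ f)
                (timeSpace (Real.sqrt (‖p‖ ^ 2 + m ^ 2)) p)‖ := by ring
        _ ≤ C₀ := hsem _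
    rw [hgf]
    calc ‖(SchwartzMap.fourierTransformCLM ℂ f) (timeSpace (Real.sqrt (‖p‖ ^ 2 + m ^ 2)) p)‖
          / Real.sqrt (‖p‖ ^ 2 + m ^ 2)
        ≤ (C₀ / (1 + ‖timeSpace (Real.sqrt (‖p‖ ^ 2 + m ^ 2)) p‖) ^ (2 * k + 5))
          / Real.sqrt (‖p‖ ^ 2 + m ^ 2) := by gcongr
      _ = C₀ / ((1 + ‖timeSpace (Real.sqrt (‖p‖ ^ 2 + m ^ 2)) p‖) ^ (2 * k + 5)
          * Real.sqrt (‖p‖ ^ 2 + m ^ 2)) := by rw [div_div]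
      _ ≤ C₀ / ((1 + m ^ 2) ^ k * ∏ i : Fin 3, (klW (p i))⁻¹) :=
          div_le_div_of_nonneg_left hC₀0 hLpos hstar
      _ = (C₀ * B) * ∏ i, klW (p i) := by
          rw [div_eq_mul_inv, mul_inv, hBval, Finset.prod_inv_distrib, inv_inv, mul_assoc]
  have hmeas : AEStronglyMeasurable (fun p : EuclideanSpace ℝ (Fin 3) =>
      ‖𝓕 (⇑f) (timeSpace (Real.sqrt (‖p‖ ^ 2 + m ^ 2)) p)‖ / Real.sqrt (‖p‖ ^ 2 + m ^ 2))
      volume := by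
    have hsq : Continuous fun p : EuclideanSpace ℝ (Fin 3) => Real.sqrt (‖p‖ ^ 2 + m ^ 2) :=
      Real.continuous_sqrt.comp (by fun_prop)
    have hts : Continuous fun p : EuclideanSpace ℝ (Fin 3) =>
        timeSpace (Real.sqrt (‖p‖ ^ 2 + m ^ 2)) p := by
      apply (EuclideanSpace.equiv (Fin 4) ℝ).symm.continuous.comp
      apply continuous_pi
      intro j
      refine Fin.cases ?_ ?_ j
      · simpa using hsq
      · intro i
        simpa using (EuclideanSpace.proj (𝕜 := ℝ) i).continuous
    have hnum : Continuous fun p : EuclideanSpace ℝ (Fin 3) =>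
        ‖𝓕 (⇑f) (timeSpace (Real.sqrt (‖p‖ ^ 2 + m ^ 2)) p)‖ := by
      rw [hgf]
      exact ((SchwartzMap.fourierTransformCLM ℂ f).continuous.comp hts).norm
    exact (hnum.measurable.div hsq.measurable).aestronglyMeasurable
  have hmaj : Integrable (fun p : EuclideanSpace ℝ (Fin 3) => (C₀ * B) * ∏ i, klW (p i)) :=
    klW3_integrable.const_mul _
  have hint : Integrable (fun p : EuclideanSpace ℝ (Fin 3) =>
      ‖𝓕 (⇑f) (timeSpace (Real.sqrt (‖p‖ ^ 2 + m ^ 2)) p)‖ / Real.sqrt (‖p‖ ^ 2 + m ^ 2)) := by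
    refine hmaj.mono' hmeas ?_
    filter_upwards [hae] with p hpb
    rwa [Real.norm_eq_abs, abs_of_nonneg (by positivity)]
  refine ⟨hint, ?_⟩
  calc (∫ p : EuclideanSpace ℝ (Fin 3),
        ‖𝓕 (⇑f) (timeSpace (Real.sqrt (‖p‖ ^ 2 + m ^ 2)) p)‖ / Real.sqrt (‖p‖ ^ 2 + m ^ 2))
      ≤ ∫ p : EuclideanSpace ℝ (Fin 3), (C₀ * B) * ∏ i, klW (p i) :=
        integral_mono_ae hint hmaj hae
    _ = (C₀ * B) * I := by rw [integral_const_mul]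
    _ ≤ ((C₀ + 1) * (I + 1)) * B := by nlinarith [hB0.le, mul_nonneg hC₀0 hI0]
    _ = (C₀ + 1) * (I + 1) * (1 + m ^ 2) ^ (-(k : ℝ)) := by rw [hBdef]
end

section
/- Let ρ be a polynomially bounded positive Borel measure on [0,∞). Then the Källén–Lehmann functional f ↦ W_ρ(f) = ∫_{[0,∞)} (∫_{ℝ³} f̂(√(|p|²+m²), p)/√(|p|²+m²) dp) dρ(m²) is a continuous linear functional on the Schwartz space 𝒮(ℝ⁴), i.e. a tempered distribution. -/
open MeasureTheory Filter Topology SchwartzMap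
open scoped FourierTransform

/-! ### Auxiliary material -/

section Aux

open Metric

local notation "E3'" => EuclideanSpace ℝ (Fin 3)
local notation "E4'" => EuclideanSpace ℝ (Fin 4)

lemma norm_timeSpace_sq (p0 : ℝ) (p : EuclideanSpace ℝ (Fin 3)) :
    ‖timeSpace p0 p‖ ^ 2 = p0 ^ 2 + ‖p‖ ^ 2 := by
  have h4 : ‖timeSpace p0 p‖ = Real.sqrt (∑ i : Fin 4, ‖timeSpace p0 p i‖ ^ 2) :=
    EuclideanSpace.norm_eq _
  have h3 : ‖p‖ = Real.sqrt (∑ i : Fin 3, ‖p i‖ ^ 2) := EuclideanSpace.norm_eq _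
  rw [h4, h3, Real.sq_sqrt (by positivity), Real.sq_sqrt (by positivity)]
  have h0 : timeSpace p0 p 0 = p0 := rfl
  have hs : ∀ j : Fin 3, timeSpace p0 p j.succ = p j := fun j => rfl
  rw [Fin.sum_univ_succ]
  simp [h0, hs]

lemma continuous_timeSpace : Continuous fun x : ℝ × EuclideanSpace ℝ (Fin 3) =>
    timeSpace x.1 x.2 := by
  unfold timeSpace
  refine ((EuclideanSpace.equiv (Fin 4) ℝ).symm.continuous).comp ?_
  refine continuous_pi fun i => ?_
  refine Fin.cases ?_ (fun j => ?_) i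
  · exact continuous_fst
  · show Continuous fun x : ℝ × EuclideanSpace ℝ (Fin 3) => x.2 j
    exact (continuous_apply j).comp
      ((EuclideanSpace.equiv (Fin 3) ℝ).continuous.comp continuous_snd)

/-- The weight `‖p‖⁻¹ (1+‖p‖)⁻⁴` dominating the inner KL integrand. -/
noncomputable def Phi (p : EuclideanSpace ℝ (Fin 3)) : ℝ := ‖p‖⁻¹ * ((1+‖p‖)^4)⁻¹

lemma Phi_nonneg (p : E3') : 0 ≤ Phi p := by unfold Phi; positivity

/-- The seminorm bound constant for a Schwartz function. -/
noncomputable def Sc (g : SchwartzMap (EuclideanSpace ℝ (Fin 4)) ℂ) (j : ℕ) : ℝ :=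
  2^(4+2*j) * (Finset.Iic (4+2*j, 0)).sup
    (schwartzSeminormFamily ℂ (EuclideanSpace ℝ (Fin 4)) ℂ) g

lemma Sc_nonneg (g : SchwartzMap E4' ℂ) (j : ℕ) : 0 ≤ Sc g j := by
  unfold Sc
  positivity

lemma key_bound (g : SchwartzMap E4' ℂ) (j : ℕ) {m2 : ℝ} (hm : 0 ≤ m2) {p : E3'}
    (hp : p ≠ 0) :
    ‖g (timeSpace (Real.sqrt (‖p‖^2+m2)) p) / ((Real.sqrt (‖p‖^2+m2) : ℝ) : ℂ)‖ ≤
      Sc g j * (((1+m2)^j)⁻¹ * Phi p) := by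
  set r := Real.sqrt (‖p‖^2+m2) with hr
  set q := timeSpace r p with hq
  have hpnorm : 0 < ‖p‖ := norm_pos_iff.2 hp
  have hr2 : r^2 = ‖p‖^2 + m2 := Real.sq_sqrt (by positivity)
  have hrnonneg : 0 ≤ r := Real.sqrt_nonneg _
  have hrpos : 0 < r := by
    nlinarith [hr2]
  have hq2 : ‖q‖^2 = r^2 + ‖p‖^2 := norm_timeSpace_sq r p
  have hqnonneg : 0 ≤ ‖q‖ := norm_nonneg _
  have hqp : ‖p‖ ≤ ‖q‖ := by nlinarith
  have hqm : m2 ≤ ‖q‖^2 := by nlinarith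
  have h1m : 1 + m2 ≤ (1+‖q‖)^2 := by nlinarith
  have hkey : (1+‖p‖)^4 * ((1+m2)^j) ≤ (1+‖q‖)^(4+2*j) := by
    have e1 : (1+‖q‖)^(4+2*j) = (1+‖q‖)^4 * ((1+‖q‖)^2)^j := by
      rw [← pow_mul, ← pow_add]
    rw [e1]
    apply mul_le_mul
    · gcongr
    · exact pow_le_pow_left₀ (by positivity) h1m j
    · positivity
    · positivity
  have hsem : (1+‖q‖)^(4+2*j) * ‖g q‖ ≤ Sc g j := by
    have := one_add_le_sup_seminorm_apply (𝕜 := ℂ) (m := (4+2*j, 0)) (k := 4+2*j) (n := 0)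
      le_rfl le_rfl g q
    rw [norm_iteratedFDeriv_zero] at this
    exact this
  have hgq : (1+‖p‖)^4 * ((1+m2)^j) * ‖g q‖ ≤ Sc g j := by
    refine le_trans ?_ hsem
    apply mul_le_mul_of_nonneg_right hkey (norm_nonneg _)
  have hnorm : ‖g q / ((r:ℝ):ℂ)‖ = ‖g q‖ * r⁻¹ := by
    rw [norm_div, Complex.norm_real, Real.norm_eq_abs, abs_of_nonneg hrnonneg, div_eq_mul_inv]
  rw [hnorm]
  have hrinv : r⁻¹ ≤ ‖p‖⁻¹ := by
    apply inv_anti₀ hpnorm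
    nlinarith
  have hgq2 : ‖g q‖ ≤ Sc g j * (((1+m2)^j)⁻¹ * ((1+‖p‖)^4)⁻¹) := by
    have hX : (0:ℝ) < (1+‖p‖)^4 * ((1+m2)^j) := by positivity
    have h0 : ‖g q‖ * ((1+‖p‖)^4 * ((1+m2)^j)) ≤ Sc g j := by
      rw [mul_comm]; exact hgq
    have h1 : ‖g q‖ ≤ Sc g j / ((1+‖p‖)^4 * ((1+m2)^j)) := (le_div_iff₀ hX).2 h0
    refine h1.trans (le_of_eq ?_)
    rw [div_eq_mul_inv, mul_inv]
    ring
  calc ‖g q‖ * r⁻¹ ≤ (Sc g j * (((1+m2)^j)⁻¹ * ((1+‖p‖)^4)⁻¹)) * ‖p‖⁻¹ := by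
        apply mul_le_mul hgq2 hrinv (by positivity)
        exact mul_nonneg (Sc_nonneg g j) (by positivity)
    _ = Sc g j * (((1+m2)^j)⁻¹ * Phi p) := by
        unfold Phi; ring

lemma integrableOn_inv_norm_ball :
    IntegrableOn (fun p : E3' => ‖p‖⁻¹) (ball 0 1) volume := by
  constructor
  · exact (measurable_norm.inv).aestronglyMeasurable
  · rw [hasFiniteIntegral_iff_ofReal]
    · set V : ENNReal := volume (ball (0:E3') 1) with hV
      have hVlt : V < ⊤ := measure_ball_lt_top
      have cover : ball (0:E3') 1 ⊆ {0} ∪ ⋃ n : ℕ,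
          (closedBall (0:E3') ((2:ℝ)⁻¹^n) \ ball (0:E3') ((2:ℝ)⁻¹^(n+1))) := by
        intro p hp
        rcases eq_or_ne p 0 with h | h
        · exact Or.inl h
        · refine Or.inr ?_
          have hn : 0 < ‖p‖ := norm_pos_iff.2 h
          have h1 : ‖p‖ < 1 := by simpa using hp
          have hex : ∃ n : ℕ, (2:ℝ)⁻¹ ^ n ≤ ‖p‖ := by
            obtain ⟨n, hn'⟩ := exists_pow_lt_of_lt_one hn (by norm_num : (2:ℝ)⁻¹ < 1)
            exact ⟨n, hn'.le⟩
          have hspec : (2:ℝ)⁻¹ ^ (Nat.find hex) ≤ ‖p‖ := Nat.find_spec hex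
          have hne : Nat.find hex ≠ 0 := by
            intro h0
            rw [h0] at hspec; simp at hspec; linarith
          obtain ⟨m, hm⟩ := Nat.exists_eq_succ_of_ne_zero hne
          rw [hm] at hspec
          have hmin : ¬ ((2:ℝ)⁻¹ ^ m ≤ ‖p‖) := Nat.find_min hex (hm ▸ Nat.lt_succ_self m)
          refine Set.mem_iUnion.2 ⟨m, ?_⟩
          constructor
          · exact mem_closedBall_zero_iff.2 (le_of_not_ge hmin)
          · intro hball
            exact absurd (mem_ball_zero_iff.1 hball) (not_lt.2 hspec)
      refine lt_of_le_of_lt (lintegral_mono_set cover) ?_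
      refine lt_of_le_of_lt (lintegral_union_le _ _ _) ?_
      have h0 : ∫⁻ p in ({0} : Set E3'), ENNReal.ofReal ‖p‖⁻¹ = 0 := by
        apply setLIntegral_measure_zero
        exact measure_singleton 0
      rw [h0, zero_add]
      refine lt_of_le_of_lt (lintegral_iUnion_le _ _) ?_
      have hterm : ∀ n : ℕ, ∫⁻ p in (closedBall (0:E3') ((2:ℝ)⁻¹^n) \ ball 0 ((2:ℝ)⁻¹^(n+1))),
          ENNReal.ofReal ‖p‖⁻¹ ≤ ENNReal.ofReal (2 * (4:ℝ)⁻¹ ^ n) * V := by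
        intro n
        have hb : ∀ p ∈ (closedBall (0:E3') ((2:ℝ)⁻¹^n) \ ball 0 ((2:ℝ)⁻¹^(n+1))),
            ENNReal.ofReal ‖p‖⁻¹ ≤ ENNReal.ofReal ((2:ℝ)^(n+1)) := by
          intro p hp
          apply ENNReal.ofReal_le_ofReal
          have h1 : (2:ℝ)⁻¹ ^ (n+1) ≤ ‖p‖ := by
            have := hp.2
            simpa [mem_ball_zero_iff, not_lt] using this
          have h2 : (0:ℝ) < (2:ℝ)⁻¹ ^ (n+1) := by positivity
          calc ‖p‖⁻¹ ≤ ((2:ℝ)⁻¹ ^ (n+1))⁻¹ := by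
                exact inv_anti₀ h2 h1
            _ = (2:ℝ)^(n+1) := by rw [← inv_pow, inv_inv]
        calc ∫⁻ p in (closedBall (0:E3') ((2:ℝ)⁻¹^n) \ ball 0 ((2:ℝ)⁻¹^(n+1))),
              ENNReal.ofReal ‖p‖⁻¹
            ≤ ∫⁻ _ in (closedBall (0:E3') ((2:ℝ)⁻¹^n) \ ball 0 ((2:ℝ)⁻¹^(n+1))),
              ENNReal.ofReal ((2:ℝ)^(n+1)) := by
              refine lintegral_mono_ae ?_
              refine (ae_restrict_iff' ?_).2 (Filter.Eventually.of_forall hb)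
              exact (measurableSet_closedBall).diff measurableSet_ball
          _ = ENNReal.ofReal ((2:ℝ)^(n+1)) *
              volume (closedBall (0:E3') ((2:ℝ)⁻¹^n) \ ball 0 ((2:ℝ)⁻¹^(n+1))) := by
              rw [setLIntegral_const]
          _ ≤ ENNReal.ofReal ((2:ℝ)^(n+1)) * volume (closedBall (0:E3') ((2:ℝ)⁻¹^n)) := by
              gcongr
              exact Set.diff_subset
          _ = ENNReal.ofReal ((2:ℝ)^(n+1)) *
              (ENNReal.ofReal (((2:ℝ)⁻¹^n) ^ Module.finrank ℝ E3') * V) := by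
              rw [Measure.addHaar_closedBall _ _ (by positivity)]
          _ = ENNReal.ofReal (2 * (4:ℝ)⁻¹ ^ n) * V := by
              rw [← mul_assoc, ← ENNReal.ofReal_mul (by positivity)]
              congr 2
              have h3 : Module.finrank ℝ E3' = 3 := finrank_euclideanSpace_fin
              rw [h3]
              have h4 : ((2:ℝ)⁻¹^n)^3 = ((2:ℝ)^(n*3))⁻¹ := by
                rw [← pow_mul, inv_pow]
              have h5 : (4:ℝ)⁻¹^n = ((2:ℝ)^(2*n))⁻¹ := by
                rw [show (4:ℝ) = 2^2 by norm_num, inv_pow, ← pow_mul]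
              rw [h4, h5]
              field_simp
              rw [← pow_add, show n + 1 + 2 * n = n * 3 + 1 by omega, pow_succ]
          _ ≤ ENNReal.ofReal (2 * (4:ℝ)⁻¹ ^ n) * V := le_rfl
      refine lt_of_le_of_lt (ENNReal.tsum_le_tsum hterm) ?_
      rw [ENNReal.tsum_mul_right]
      refine ENNReal.mul_lt_top ?_ hVlt
      rw [← ENNReal.ofReal_tsum_of_nonneg (fun n => by positivity)
        (by
          apply Summable.mul_left
          exact summable_geometric_of_lt_one (by norm_num) (by norm_num))]
      exact ENNReal.ofReal_lt_top
    · exact Filter.Eventually.of_forall (fun p => by positivity)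

lemma integrable_Phi : Integrable Phi (volume : Measure E3') := by
  have hmeas : Measurable Phi := by
    apply Measurable.mul
    · exact measurable_norm.inv
    · exact (((measurable_norm.const_add 1)).pow_const 4).inv
  rw [← integrableOn_univ, ← Set.union_compl_self (ball (0:E3') 1)]
  apply IntegrableOn.union
  · refine Integrable.mono' integrableOn_inv_norm_ball hmeas.aestronglyMeasurable ?_
    refine Filter.Eventually.of_forall fun p => ?_
    rw [Real.norm_eq_abs, abs_of_nonneg (Phi_nonneg p)]
    unfold Phi
    have h1 : ((1+‖p‖)^4)⁻¹ ≤ 1 :=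
      inv_le_one_of_one_le₀ (one_le_pow₀ (by linarith [norm_nonneg p]))
    calc ‖p‖⁻¹ * ((1+‖p‖)^4)⁻¹ ≤ ‖p‖⁻¹ * 1 := by
          apply mul_le_mul_of_nonneg_left h1 (by positivity)
      _ = ‖p‖⁻¹ := mul_one _
  · have hint : Integrable (fun p : E3' => ((1+‖p‖)^4)⁻¹) volume := by
      have h4 : (Module.finrank ℝ E3' : ℝ) < 4 := by
        rw [finrank_euclideanSpace_fin]; norm_num
      have := integrable_one_add_norm (E := E3') (μ := volume) (r := 4) h4
      refine this.congr ?_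
      refine Filter.Eventually.of_forall fun p => ?_
      show (1+‖p‖) ^ ((-4):ℝ) = ((1+‖p‖)^(4:ℕ))⁻¹
      rw [show ((-4):ℝ) = -((4:ℕ):ℝ) by norm_num, Real.rpow_neg (by positivity),
        Real.rpow_natCast]
    refine Integrable.mono' hint.integrableOn hmeas.aestronglyMeasurable ?_
    refine (ae_restrict_iff' measurableSet_ball.compl).2 (Filter.Eventually.of_forall ?_)
    intro p hp
    rw [Real.norm_eq_abs, abs_of_nonneg (Phi_nonneg p)]
    unfold Phi
    have hp1 : (1:ℝ) ≤ ‖p‖ := by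
      have := hp
      simp only [Set.mem_compl_iff, mem_ball_zero_iff, not_lt] at this
      exact this
    have h1 : ‖p‖⁻¹ ≤ 1 := inv_le_one_of_one_le₀ hp1
    calc ‖p‖⁻¹ * ((1+‖p‖)^4)⁻¹ ≤ 1 * ((1+‖p‖)^4)⁻¹ := by
          apply mul_le_mul_of_nonneg_right h1 (by positivity)
      _ = ((1+‖p‖)^4)⁻¹ := one_mul _

/-- The inner integral for a general (not yet Fourier-transformed) function. -/
noncomputable def innerI (g : EuclideanSpace ℝ (Fin 4) → ℂ) (m2 : ℝ) : ℂ :=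
  ∫ p : EuclideanSpace ℝ (Fin 3),
    g (timeSpace (Real.sqrt (‖p‖ ^ 2 + m2)) p) / (Real.sqrt (‖p‖ ^ 2 + m2) : ℂ)

lemma measurable_integrand {g : E4' → ℂ} (hg : Continuous g) :
    Measurable fun x : ℝ × E3' =>
      g (timeSpace (Real.sqrt (‖x.2‖ ^ 2 + x.1)) x.2) / (Real.sqrt (‖x.2‖ ^ 2 + x.1) : ℂ) := by
  have hs : Continuous fun x : ℝ × E3' => Real.sqrt (‖x.2‖ ^ 2 + x.1) :=
    ((continuous_norm.comp continuous_snd).pow 2 |>.add continuous_fst).sqrt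
  have hnum : Continuous fun x : ℝ × E3' =>
      g (timeSpace (Real.sqrt (‖x.2‖ ^ 2 + x.1)) x.2) :=
    hg.comp (continuous_timeSpace.comp (hs.prodMk continuous_snd))
  have hden : Continuous fun x : ℝ × E3' => ((Real.sqrt (‖x.2‖ ^ 2 + x.1) : ℝ) : ℂ) :=
    Complex.continuous_ofReal.comp hs
  exact hnum.measurable.div hden.measurable

lemma innerI_stronglyMeasurable {g : E4' → ℂ} (hg : Continuous g) :
    StronglyMeasurable (innerI g) :=
  (measurable_integrand hg).stronglyMeasurable.integral_prod_right'

lemma ae_ne_zero : ∀ᵐ p : E3' ∂volume, p ≠ 0 := by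
  rw [ae_iff]
  have : {p : E3' | ¬ p ≠ 0} = {0} := by
    ext p; simp
  rw [this]
  exact measure_singleton 0

lemma inner_integrable (g : SchwartzMap E4' ℂ) (j : ℕ) {m2 : ℝ} (hm : 0 ≤ m2) :
    Integrable (fun p : E3' =>
      (g : E4' → ℂ) (timeSpace (Real.sqrt (‖p‖ ^ 2 + m2)) p) /
        (Real.sqrt (‖p‖ ^ 2 + m2) : ℂ)) volume := by
  refine Integrable.mono'
    ((integrable_Phi.const_mul (Sc g j * ((1+m2)^j)⁻¹))) ?_ ?_
  · exact ((measurable_integrand g.continuous).comp measurable_prodMk_left).aestronglyMeasurable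
  · refine ae_ne_zero.mono fun p hp => ?_
    refine (key_bound g j hm hp).trans (le_of_eq ?_)
    ring

lemma innerI_bound (g : SchwartzMap E4' ℂ) (j : ℕ) {m2 : ℝ} (hm : 0 ≤ m2) :
    ‖innerI (⇑g) m2‖ ≤ (Sc g j * (∫ p : E3', Phi p)) * ((1+m2)^j)⁻¹ := by
  have h := norm_integral_le_of_norm_le
    (g := fun p : E3' => (Sc g j * ((1+m2)^j)⁻¹) * Phi p)
    ((integrable_Phi.const_mul (Sc g j * ((1+m2)^j)⁻¹)))
    (ae_ne_zero.mono fun p hp => (key_bound g j hm hp).trans (le_of_eq (by ring)))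
  refine h.trans (le_of_eq ?_)
  rw [MeasureTheory.integral_const_mul]
  ring

lemma rho_lintegral_finite (ρ : Measure ℝ) (C : ℝ) (N : ℕ)
    (hρ : ∀ L : ℝ, 0 ≤ L → ρ (Set.Icc 0 L) ≤ ENNReal.ofReal (C * (1 + L ^ N))) :
    ∫⁻ m2 in Set.Ici (0:ℝ), ENNReal.ofReal (((1+m2)^(N+2))⁻¹) ∂ρ < ⊤ := by
  set C' : ℝ := max C 1 with hC'
  have hC'pos : 0 < C' := lt_of_lt_of_le one_pos (le_max_right _ _)
  have hρ' : ∀ L : ℝ, 0 ≤ L → ρ (Set.Icc 0 L) ≤ ENNReal.ofReal (C' * (1 + L ^ N)) := by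
    intro L hL
    refine (hρ L hL).trans (ENNReal.ofReal_le_ofReal ?_)
    have h1 : (0:ℝ) ≤ 1 + L ^ N := by positivity
    nlinarith [le_max_left C 1]
  have cover : Set.Ici (0:ℝ) ⊆ ⋃ n : ℕ, Set.Ico (n:ℝ) (n+1) := by
    intro x hx
    refine Set.mem_iUnion.2 ⟨⌊x⌋₊, ?_⟩
    exact ⟨Nat.floor_le hx, Nat.lt_floor_add_one x⟩
  refine lt_of_le_of_lt (lintegral_mono_set cover) ?_
  refine lt_of_le_of_lt (lintegral_iUnion_le _ _) ?_
  have hterm : ∀ n : ℕ, ∫⁻ m2 in Set.Ico (n:ℝ) (n+1), ENNReal.ofReal (((1+m2)^(N+2))⁻¹) ∂ρ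
      ≤ ENNReal.ofReal ((2 * C') * (((1+(n:ℝ))^2)⁻¹)) := by
    intro n
    have hb : ∀ m2 ∈ Set.Ico (n:ℝ) (n+1),
        ENNReal.ofReal (((1+m2)^(N+2))⁻¹) ≤ ENNReal.ofReal (((1+(n:ℝ))^(N+2))⁻¹) := by
      intro m2 hm
      apply ENNReal.ofReal_le_ofReal
      have h1 : (0:ℝ) < (1+(n:ℝ))^(N+2) := by positivity
      apply inv_anti₀ h1
      have : (n:ℝ) ≤ m2 := hm.1
      gcongr

    calc ∫⁻ m2 in Set.Ico (n:ℝ) (n+1), ENNReal.ofReal (((1+m2)^(N+2))⁻¹) ∂ρ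
        ≤ ∫⁻ _ in Set.Ico (n:ℝ) (n+1), ENNReal.ofReal (((1+(n:ℝ))^(N+2))⁻¹) ∂ρ := by
          refine lintegral_mono_ae ((ae_restrict_iff' measurableSet_Ico).2
            (Filter.Eventually.of_forall hb))
      _ = ENNReal.ofReal (((1+(n:ℝ))^(N+2))⁻¹) * ρ (Set.Ico (n:ℝ) (n+1)) := by
          rw [setLIntegral_const]
      _ ≤ ENNReal.ofReal (((1+(n:ℝ))^(N+2))⁻¹) * ENNReal.ofReal (C' * (1 + ((n:ℝ)+1) ^ N)) := by
          gcongr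
          refine le_trans (measure_mono ?_) (hρ' ((n:ℝ)+1) (by positivity))
          intro x hx
          exact ⟨le_trans (Nat.cast_nonneg n) hx.1, hx.2.le⟩
      _ = ENNReal.ofReal ((((1+(n:ℝ))^(N+2))⁻¹) * (C' * (1 + ((n:ℝ)+1) ^ N))) := by
          rw [← ENNReal.ofReal_mul (by positivity)]
      _ ≤ ENNReal.ofReal ((2 * C') * (((1+(n:ℝ))^2)⁻¹)) := by
          apply ENNReal.ofReal_le_ofReal
          have h1 : (0:ℝ) < 1 + (n:ℝ) := by positivity
          have h2 : (1:ℝ) ≤ (1+(n:ℝ))^N := one_le_pow₀ (by linarith)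
          have h3 : 1 + ((n:ℝ)+1)^N ≤ 2 * (1+(n:ℝ))^N := by
            have : ((n:ℝ)+1)^N = (1+(n:ℝ))^N := by ring_nf
            rw [this]; linarith
          have h4 : (1+(n:ℝ))^(N+2) = (1+(n:ℝ))^N * (1+(n:ℝ))^2 := by
            rw [← pow_add]
          rw [h4, mul_inv]
          have h5 : (0:ℝ) < ((1+(n:ℝ))^N)⁻¹ := by positivity
          have h6 : (0:ℝ) < ((1+(n:ℝ))^2)⁻¹ := by positivity
          calc ((1+(n:ℝ))^N)⁻¹ * ((1+(n:ℝ))^2)⁻¹ * (C' * (1 + ((n:ℝ)+1) ^ N))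
              ≤ ((1+(n:ℝ))^N)⁻¹ * ((1+(n:ℝ))^2)⁻¹ * (C' * (2 * (1+(n:ℝ))^N)) := by
                gcongr
            _ = (2 * C') * (((1+(n:ℝ))^2)⁻¹) * (((1+(n:ℝ))^N)⁻¹ * (1+(n:ℝ))^N) := by ring
            _ = (2 * C') * (((1+(n:ℝ))^2)⁻¹) := by
                rw [inv_mul_cancel₀ (by positivity), mul_one]
  refine lt_of_le_of_lt (ENNReal.tsum_le_tsum hterm) ?_
  have hsum : Summable (fun n : ℕ => (2 * C') * (((1+(n:ℝ))^2)⁻¹)) := by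
    apply Summable.mul_left
    have : Summable (fun n : ℕ => (((n:ℝ)+1)^2)⁻¹) := by
      have := (summable_nat_add_iff (f := fun n : ℕ => ((n:ℝ)^2)⁻¹) 1).2 ?_
      · convert this using 2 with n
        · rfl
        · push_cast; ring
      · simpa [one_div] using Real.summable_one_div_nat_pow.2 (by norm_num : 2 ≤ 2)
    convert this using 2 with n
    · rfl
    · ring
  rw [← ENNReal.ofReal_tsum_of_nonneg (fun n => by positivity) hsum]
  exact ENNReal.ofReal_lt_top

end Aux

/-- For a polynomially bounded positive Borel measure `ρ` on `[0,∞)`, the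
Källén–Lehmann functional `f ↦ W_ρ(f)` is a tempered distribution, i.e. it agrees with a
continuous linear functional on the Schwartz space `𝓢(ℝ⁴, ℂ)`. -/
theorem kl_tempered_distribution (ρ : Measure ℝ) (C : ℝ) (N : ℕ)
    (hρ : ∀ L : ℝ, 0 ≤ L → ρ (Set.Icc 0 L) ≤ ENNReal.ofReal (C * (1 + L ^ N))) :
    ∃ T : 𝓢(EuclideanSpace ℝ (Fin 4), ℂ) →L[ℂ] ℂ,
      ∀ f : 𝓢(EuclideanSpace ℝ (Fin 4), ℂ), T f = KL ρ ⇑f := by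
  classical
  have hfin : ∫⁻ m2 in Set.Ici (0:ℝ), ENNReal.ofReal (((1+m2)^(N+2))⁻¹) ∂ρ < ⊤ :=
    rho_lintegral_finite ρ C N hρ
  set ψ : ℝ → ℝ := fun m2 => ((1+m2)^(N+2))⁻¹ with hψdef
  have hψmeas : Measurable ψ := ((measurable_id.const_add 1).pow_const (N+2)).inv
  have hψint : IntegrableOn ψ (Set.Ici 0) ρ := by
    constructor
    · exact hψmeas.aestronglyMeasurable
    · rw [hasFiniteIntegral_iff_norm]
      refine lt_of_le_of_lt (lintegral_mono_ae ?_) hfin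
      refine (ae_restrict_iff' measurableSet_Ici).2 (Filter.Eventually.of_forall
        fun m2 hm => ?_)
      have hm' : (0:ℝ) ≤ m2 := hm
      apply ENNReal.ofReal_le_ofReal
      rw [Real.norm_eq_abs, abs_of_nonneg (by positivity)]
  set IΦ : ℝ := ∫ p : EuclideanSpace ℝ (Fin 3), Phi p with hIΦdef
  have hIΦ : 0 ≤ IΦ := integral_nonneg Phi_nonneg
  set Mρ : ℝ := ∫ m2 in Set.Ici (0:ℝ), ψ m2 ∂ρ with hMρdef
  have hMρ : 0 ≤ Mρ := setIntegral_nonneg measurableSet_Ici (fun m2 hm => by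
    have hm' : (0:ℝ) ≤ m2 := hm
    positivity)
  have houter : ∀ g : 𝓢(EuclideanSpace ℝ (Fin 4), ℂ),
      IntegrableOn (innerI ⇑g) (Set.Ici 0) ρ := by
    intro g
    refine Integrable.mono' (hψint.const_mul (Sc g (N+2) * IΦ))
      ((innerI_stronglyMeasurable g.continuous).aestronglyMeasurable) ?_
    refine (ae_restrict_iff' measurableSet_Ici).2 (Filter.Eventually.of_forall
      fun m2 hm => ?_)
    exact innerI_bound g (N+2) hm
  set A : 𝓢(EuclideanSpace ℝ (Fin 4), ℂ) → ℂ :=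
    fun g => ∫ m2 in Set.Ici (0:ℝ), innerI ⇑g m2 ∂ρ with hAdef
  have hadd : ∀ g₁ g₂ : 𝓢(EuclideanSpace ℝ (Fin 4), ℂ), A (g₁ + g₂) = A g₁ + A g₂ := by
    intro g₁ g₂
    have hcong : Set.EqOn (innerI ⇑(g₁ + g₂)) (fun m2 => innerI ⇑g₁ m2 + innerI ⇑g₂ m2)
        (Set.Ici (0:ℝ)) := by
      intro m2 hm
      have hm' : (0:ℝ) ≤ m2 := hm
      show innerI ⇑(g₁ + g₂) m2 = innerI ⇑g₁ m2 + innerI ⇑g₂ m2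
      unfold innerI
      rw [← integral_add (inner_integrable g₁ (N+2) hm') (inner_integrable g₂ (N+2) hm')]
      congr 1
      funext p
      simp [add_div]
    calc A (g₁ + g₂) = ∫ m2 in Set.Ici (0:ℝ),
          (innerI ⇑g₁ m2 + innerI ⇑g₂ m2) ∂ρ := setIntegral_congr_fun measurableSet_Ici hcong
      _ = A g₁ + A g₂ := integral_add (houter g₁) (houter g₂)
  have hsmul : ∀ (a : ℂ) (g : 𝓢(EuclideanSpace ℝ (Fin 4), ℂ)),
      A (a • g) = RingHom.id ℂ a • A g := by
    intro a g
    have hc : ∀ m2 : ℝ, innerI ⇑(a • g) m2 = a • innerI ⇑g m2 := by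
      intro m2
      unfold innerI
      rw [← integral_smul]
      congr 1
      funext p
      simp [smul_eq_mul, mul_div_assoc]
    show (∫ m2 in Set.Ici (0:ℝ), innerI ⇑(a • g) m2 ∂ρ) = a • A g
    simp only [hc]
    rw [integral_smul]
  have hbound : ∃ (s : Finset (ℕ × ℕ)) (C₀ : ℝ), 0 ≤ C₀ ∧
      ∀ g : 𝓢(EuclideanSpace ℝ (Fin 4), ℂ), ‖A g‖ ≤
        C₀ * s.sup (schwartzSeminormFamily ℂ (EuclideanSpace ℝ (Fin 4)) ℂ) g := by
    refine ⟨Finset.Iic (4+2*(N+2), 0), 2^(4+2*(N+2)) * IΦ * Mρ,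
      mul_nonneg (mul_nonneg (by positivity) hIΦ) hMρ, fun g => ?_⟩
    calc ‖A g‖ ≤ ∫ m2 in Set.Ici (0:ℝ), (Sc g (N+2) * IΦ) * ψ m2 ∂ρ := by
          refine norm_integral_le_of_norm_le (hψint.const_mul _) ?_
          refine (ae_restrict_iff' measurableSet_Ici).2 (Filter.Eventually.of_forall
            fun m2 hm => ?_)
          exact innerI_bound g (N+2) hm
      _ = (Sc g (N+2) * IΦ) * Mρ := by rw [MeasureTheory.integral_const_mul]
      _ = (2^(4+2*(N+2)) * IΦ * Mρ) *
          (Finset.Iic (4+2*(N+2), 0)).sup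
            (schwartzSeminormFamily ℂ (EuclideanSpace ℝ (Fin 4)) ℂ) g := by
          unfold Sc
          ring
  set B : 𝓢(EuclideanSpace ℝ (Fin 4), ℂ) →L[ℂ] ℂ :=
    SchwartzMap.mkCLMtoNormedSpace A hadd hsmul hbound with hBdef
  refine ⟨B.comp (fourierTransformCLM ℂ), fun f => ?_⟩
  have hB : B (fourierTransformCLM ℂ f) = A (fourierTransformCLM ℂ f) := rfl
  rw [ContinuousLinearMap.comp_apply, hB]
  show (∫ m2 in Set.Ici (0:ℝ), innerI ⇑(fourierTransformCLM ℂ f) m2 ∂ρ) = KL ρ ⇑f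
  unfold KL
  refine setIntegral_congr_fun measurableSet_Ici (fun m2 _ => ?_)
  show innerI ⇑(fourierTransformCLM ℂ f) m2 = KLinner ⇑f m2
  unfold innerI KLinner
  rw [fourierTransformCLM_apply, SchwartzMap.fourier_coe]
end

section
/- (Theorem 3.2, main result.) Let ρ be a finite positive Borel measure on [0,∞), i.e. ∫_{[0,∞)} dρ(m²) < ∞, and let W_ρ be its Källén–Lehmann functional with scaled functionals W_{ρ,λ}(f) = λ^{-4} W_ρ(f(λ^{-1}·)). Then for every real ω > 2 and every Schwartz function f on ℝ⁴, lim_{λ→0⁺} λ^ω W_{ρ,λ}(f) = 0. Consequently the Steinmann scaling degree of W_ρ is at most 2, the scaling degree of a free theory, so the singularity hypothesis sd(W_ρ) > 2 fails. -/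
open MeasureTheory Filter Topology SchwartzMap
open scoped FourierTransform

section Auxiliary

open Set
open scoped ENNReal RealInnerProductSpace

local notation "E3" => EuclideanSpace ℝ (Fin 3)
local notation "E4" => EuclideanSpace ℝ (Fin 4)

/-- `‖q‖⁻¹` is integrable on the unit ball of `ℝ³`. -/
lemma intOn_inv_norm_ball :
    IntegrableOn (fun q : E3 => ‖q‖⁻¹) (Metric.ball 0 1) volume := by
  have hmeas : Measurable fun q : E3 => ‖q‖⁻¹ := measurable_norm.inv
  constructor
  · exact (hmeas.aestronglyMeasurable).restrict
  · rw [HasFiniteIntegral, lintegral_enorm_of_nonneg (fun q => inv_nonneg.2 (norm_nonneg q)),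
      lintegral_eq_lintegral_meas_le _ (Eventually.of_forall fun q => inv_nonneg.2 (norm_nonneg q))
      hmeas.aemeasurable]
    set mB := volume (Metric.ball (0 : E3) 1) with hmB
    have hmBfin : mB < ∞ := measure_ball_lt_top
    calc ∫⁻ t in Ioi (0:ℝ), (volume.restrict (Metric.ball (0:E3) 1)) {a : E3 | t ≤ ‖a‖⁻¹}
        ≤ ∫⁻ t in Ioc (0:ℝ) 1 ∪ Ioi 1,
            (volume.restrict (Metric.ball (0:E3) 1)) {a : E3 | t ≤ ‖a‖⁻¹} :=
          lintegral_mono_set Ioi_subset_Ioc_union_Ioi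
      _ ≤ (∫⁻ t in Ioc (0:ℝ) 1, (volume.restrict (Metric.ball (0:E3) 1)) {a : E3 | t ≤ ‖a‖⁻¹})
          + ∫⁻ t in Ioi (1:ℝ), (volume.restrict (Metric.ball (0:E3) 1)) {a : E3 | t ≤ ‖a‖⁻¹} :=
          lintegral_union_le _ _ _
      _ < ∞ := by
          refine ENNReal.add_lt_top.2 ⟨?_, ?_⟩
          · calc ∫⁻ t in Ioc (0:ℝ) 1, (volume.restrict (Metric.ball (0:E3) 1)) {a : E3 | t ≤ ‖a‖⁻¹}
                ≤ ∫⁻ _t in Ioc (0:ℝ) 1, mB := by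
                  refine lintegral_mono fun t => ?_
                  exact (measure_mono (subset_univ _)).trans_eq (Measure.restrict_apply_univ _)
              _ = mB * volume (Ioc (0:ℝ) 1) := by rw [setLIntegral_const]
              _ < ∞ := by
                  refine ENNReal.mul_lt_top hmBfin ?_
                  simp [Real.volume_Ioc]
          · have hsub : ∀ t : ℝ, 1 < t → {a : E3 | t ≤ ‖a‖⁻¹} ⊆ Metric.closedBall 0 t⁻¹ := by
              intro t ht a ha
              simp only [mem_setOf_eq] at ha
              rcases eq_or_ne a 0 with rfl | h0
              · simp at ha; linarith
              · have hn : 0 < ‖a‖ := norm_pos_iff.2 h0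
                have : ‖a‖ ≤ t⁻¹ := by
                  rw [← inv_inv ‖a‖]
                  exact inv_anti₀ (by linarith) ha
                simpa [Metric.mem_closedBall, dist_zero_right] using this
            calc ∫⁻ t in Ioi (1:ℝ), (volume.restrict (Metric.ball (0:E3) 1)) {a : E3 | t ≤ ‖a‖⁻¹}
                ≤ ∫⁻ t in Ioi (1:ℝ), ENNReal.ofReal (t ^ (-(3:ℝ))) * mB := by
                  refine setLIntegral_mono' measurableSet_Ioi fun t ht => ?_
                  have ht1 : (1:ℝ) < t := ht
                  have h1 : (volume.restrict (Metric.ball (0:E3) 1)) {a : E3 | t ≤ ‖a‖⁻¹}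
                      ≤ volume (Metric.closedBall (0:E3) t⁻¹) :=
                    le_trans (Measure.restrict_le_self _) (measure_mono (hsub t ht1))
                  refine h1.trans ?_
                  rw [Measure.addHaar_closedBall volume (0:E3) (by positivity : (0:ℝ) ≤ t⁻¹)]
                  have : (t⁻¹) ^ Module.finrank ℝ E3 = t ^ (-(3:ℝ)) := by
                    rw [finrank_euclideanSpace_fin]
                    rw [Real.rpow_neg (by linarith : (0:ℝ) ≤ t)]
                    rw [show ((3:ℝ)) = ((3:ℕ):ℝ) by norm_num, Real.rpow_natCast]
                    exact inv_pow t 3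
                  rw [this]
              _ < ∞ := by
                  rw [lintegral_mul_const' _ _ hmBfin.ne]
                  exact ENNReal.mul_lt_top
                    ((integrableOn_Ioi_rpow_of_lt (by norm_num) one_pos).setLIntegral_lt_top)
                    hmBfin

/-- The majorant `C·((1+‖q‖)⁴‖q‖)⁻¹` is integrable on `ℝ³`. -/
lemma majorant_integrable {C : ℝ} (hC : 0 ≤ C) :
    Integrable (fun q : E3 => C * (((1 + ‖q‖) ^ 4) * ‖q‖)⁻¹) volume := by
  have hmeas : Measurable fun q : E3 => C * (((1 + ‖q‖) ^ 4) * ‖q‖)⁻¹ := by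
    apply measurable_const.mul
    exact (((measurable_const.add measurable_norm).pow_const 4).mul measurable_norm).inv
  have hnn : ∀ q : E3, 0 ≤ C * (((1 + ‖q‖) ^ 4) * ‖q‖)⁻¹ := fun q => by positivity
  rw [← integrableOn_univ, ← Set.union_compl_self (Metric.ball (0:E3) 1)]
  apply IntegrableOn.union
  · refine Integrable.mono' (intOn_inv_norm_ball.const_mul C) hmeas.aestronglyMeasurable.restrict
      (Eventually.of_forall fun q => ?_)
    rw [Real.norm_eq_abs, abs_of_nonneg (hnn q)]
    have h1 : (1:ℝ) ≤ (1 + ‖q‖) ^ 4 := one_le_pow₀ (by simp [norm_nonneg])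
    rw [mul_inv]
    calc C * (((1 + ‖q‖) ^ 4)⁻¹ * ‖q‖⁻¹) ≤ C * (1 * ‖q‖⁻¹) := by
          gcongr
          exact inv_le_one_of_one_le₀ h1
      _ = C * ‖q‖⁻¹ := by ring
  · have hint : Integrable (fun q : E3 => C * (1 + ‖q‖) ^ (-(4:ℝ))) volume := by
      refine (integrable_one_add_norm ?_).const_mul C
      rw [finrank_euclideanSpace_fin]; norm_num
    refine Integrable.mono' hint.integrableOn hmeas.aestronglyMeasurable.restrict ?_
    rw [ae_restrict_iff' measurableSet_ball.compl]
    refine Eventually.of_forall fun q hq => ?_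
    have hq1 : (1:ℝ) ≤ ‖q‖ := by
      simp only [Set.mem_compl_iff, Metric.mem_ball, dist_zero_right, not_lt] at hq
      exact hq
    rw [Real.norm_eq_abs, abs_of_nonneg (hnn q), mul_inv]
    have hrpow : (1 + ‖q‖) ^ (-(4:ℝ)) = ((1 + ‖q‖) ^ 4)⁻¹ := by
      rw [Real.rpow_neg (by positivity), show ((4:ℝ)) = ((4:ℕ):ℝ) by norm_num,
        Real.rpow_natCast]
    rw [hrpow]
    calc C * (((1 + ‖q‖) ^ 4)⁻¹ * ‖q‖⁻¹) ≤ C * (((1 + ‖q‖) ^ 4)⁻¹ * 1) := by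
          gcongr
          exact inv_le_one_of_one_le₀ hq1
      _ = C * ((1 + ‖q‖) ^ 4)⁻¹ := by ring

/-- Polynomial decay of order 4 for the Fourier transform of a Schwartz function. -/
lemma schwartz_fourier_decay (f : 𝓢(E4, ℂ)) :
    ∃ C : ℝ, 0 ≤ C ∧ ∀ x : E4, ‖𝓕 ⇑f x‖ ≤ C * ((1 + ‖x‖) ^ 4)⁻¹ := by
  set F := fourierTransformCLM ℝ f with hF
  have hFeq : ⇑F = 𝓕 ⇑f := by rw [hF, fourierTransformCLM_apply, SchwartzMap.fourier_coe]
  set C₀ : ℝ := 2 ^ 4 * ((Finset.Iic ((4:ℕ),(0:ℕ))).sup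
    (fun m => SchwartzMap.seminorm ℝ m.1 m.2) F) with hC₀
  refine ⟨max C₀ 0, le_max_right _ _, fun x => ?_⟩
  have h := one_add_le_sup_seminorm_apply (𝕜 := ℝ) (m := ((4:ℕ),(0:ℕ)))
    le_rfl le_rfl F x
  rw [norm_iteratedFDeriv_zero] at h
  have hpos : (0:ℝ) < (1 + ‖x‖) ^ 4 := by positivity
  rw [← hFeq]
  simp only at h
  calc ‖F x‖ ≤ C₀ / (1 + ‖x‖) ^ 4 := by
        rw [le_div_iff₀ hpos, mul_comm]; exact h
    _ ≤ max C₀ 0 * ((1 + ‖x‖) ^ 4)⁻¹ := by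
        rw [div_eq_mul_inv]
        exact mul_le_mul_of_nonneg_right (le_max_left _ _) (by positivity)

/-- Scaling behaviour of the Fourier transform under dilations. -/
lemma fourier_scale {V : Type*} [NormedAddCommGroup V] [InnerProductSpace ℝ V]
    [FiniteDimensional ℝ V] [MeasurableSpace V] [BorelSpace V]
    (f : V → ℂ) {lam : ℝ} (hl : 0 < lam) (ξ : V) :
    𝓕 (fun x => f (lam⁻¹ • x)) ξ = (lam ^ Module.finrank ℝ V : ℝ) • 𝓕 f (lam • ξ) := by
  rw [Real.fourier_eq, Real.fourier_eq]
  have h : (∫ v : V, 𝐞 (-⟪v, ξ⟫) • f (lam⁻¹ • v))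
      = ∫ v : V, (fun w : V => 𝐞 (-⟪w, lam • ξ⟫) • f w) (lam⁻¹ • v) := by
    congr 1
    ext v
    show 𝐞 (-⟪v, ξ⟫) • f (lam⁻¹ • v) = 𝐞 (-⟪lam⁻¹ • v, lam • ξ⟫) • f (lam⁻¹ • v)
    congr 2
    rw [real_inner_smul_right, real_inner_smul_left, ← mul_assoc,
      mul_inv_cancel₀ hl.ne', one_mul]
  rw [h, MeasureTheory.Measure.integral_comp_inv_smul_of_nonneg volume
    (fun w : V => 𝐞 (-⟪w, lam • ξ⟫) • f w) hl.le]

/-- The spatial part is dominated by the norm of `timeSpace t p`. -/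
lemma norm_le_norm_timeSpace (t : ℝ) (p : E3) : ‖p‖ ≤ ‖timeSpace t p‖ := by
  have h4 : ‖timeSpace t p‖ = Real.sqrt (t ^ 2 + ∑ j : Fin 3, (p j) ^ 2) := by
    rw [EuclideanSpace.norm_eq]
    congr 1
    rw [Fin.sum_univ_succ]
    simp [timeSpace, Real.norm_eq_abs, sq_abs]
  have h3 : ‖p‖ = Real.sqrt (∑ j : Fin 3, (p j) ^ 2) := by
    rw [EuclideanSpace.norm_eq]; simp [Real.norm_eq_abs, sq_abs]
  rw [h3, h4]
  exact Real.sqrt_le_sqrt (by nlinarith [sq_nonneg t])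

/-- The key quantitative estimate: the inner Källén–Lehmann integral of the scaled
function is `O(λ²)`, uniformly in the squared mass. -/
lemma KLinner_bound (f : 𝓢(E4, ℂ)) :
    ∃ M : ℝ, 0 ≤ M ∧ ∀ lam : ℝ, 0 < lam → ∀ m2 : ℝ, 0 ≤ m2 →
      ‖KLinner (fun x => f (lam⁻¹ • x)) m2‖ ≤ lam ^ 2 * M := by
  obtain ⟨C, hC, hdecay⟩ := schwartz_fourier_decay f
  set B : E3 → ℝ := fun q => C * (((1 + ‖q‖) ^ 4) * ‖q‖)⁻¹ with hBdef
  have hB : Integrable B volume := majorant_integrable hC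
  have hBnn : ∀ q, 0 ≤ B q := fun q => by rw [hBdef]; positivity
  refine ⟨∫ q : E3, B q, integral_nonneg hBnn, fun lam hlam m2 hm2 => ?_⟩
  set M := ∫ q : E3, B q with hM
  have h0 : ∀ᵐ (p : E3) ∂volume, p ≠ 0 := by
    rw [ae_iff]
    simpa using measure_singleton (0 : E3)
  have hint : Integrable (fun p : E3 => lam ^ 5 * B (lam • p)) volume :=
    ((integrable_comp_smul_iff volume B hlam.ne').mpr hB).const_mul _
  calc ‖KLinner (fun x => f (lam⁻¹ • x)) m2‖
      ≤ ∫ p : E3, ‖𝓕 (fun x => f (lam⁻¹ • x))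
          (timeSpace (Real.sqrt (‖p‖ ^ 2 + m2)) p) / (Real.sqrt (‖p‖ ^ 2 + m2) : ℂ)‖ :=
        norm_integral_le_integral_norm _
    _ ≤ ∫ p : E3, lam ^ 5 * B (lam • p) := by
        refine integral_mono_of_nonneg (Eventually.of_forall fun p => norm_nonneg _) hint ?_
        filter_upwards [h0] with p hp
        set s := Real.sqrt (‖p‖ ^ 2 + m2) with hs
        set X := timeSpace s p with hX
        have hps : 0 < ‖p‖ := norm_pos_iff.2 hp
        have hs_ge : ‖p‖ ≤ s := by
          rw [hs, show ‖p‖ = Real.sqrt (‖p‖ ^ 2) from (Real.sqrt_sq (norm_nonneg p)).symm]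
          exact Real.sqrt_le_sqrt
            (by simp [Real.sq_sqrt, norm_nonneg, hm2, le_add_iff_nonneg_right])
        have hs_pos : 0 < s := lt_of_lt_of_le hps hs_ge
        have hgF : 𝓕 (fun x => f (lam⁻¹ • x)) X = ((lam ^ 4 : ℝ)) • 𝓕 ⇑f (lam • X) := by
          simpa [finrank_euclideanSpace_fin] using fourier_scale ⇑f hlam X
        have hnorm : ‖𝓕 (fun x => f (lam⁻¹ • x)) X / (s : ℂ)‖
            = lam ^ 4 * ‖𝓕 ⇑f (lam • X)‖ / s := by
          rw [norm_div, hgF, norm_smul, Real.norm_eq_abs, abs_of_pos (pow_pos hlam 4),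
            Complex.norm_real, Real.norm_eq_abs, abs_of_pos hs_pos]
        have hn : ‖lam • p‖ = lam * ‖p‖ := by
          rw [norm_smul, Real.norm_eq_abs, abs_of_pos hlam]
        have hnX : ‖lam • p‖ ≤ ‖lam • X‖ := by
          rw [norm_smul, norm_smul]
          exact mul_le_mul_of_nonneg_left (norm_le_norm_timeSpace s p) (norm_nonneg _)
        have h2 : ((1 + ‖lam • X‖) ^ 4)⁻¹ ≤ ((1 + ‖lam • p‖) ^ 4)⁻¹ := by
          apply inv_anti₀ (by positivity)
          gcongr
        rw [hnorm]
        calc lam ^ 4 * ‖𝓕 ⇑f (lam • X)‖ / s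
            ≤ lam ^ 4 * (C * ((1 + ‖lam • X‖) ^ 4)⁻¹) / s := by
              gcongr
              exact hdecay _
          _ ≤ lam ^ 4 * (C * ((1 + ‖lam • p‖) ^ 4)⁻¹) / s := by gcongr
          _ ≤ lam ^ 5 * B (lam • p) := by
              rw [hBdef]
              simp only
              rw [div_eq_mul_inv, mul_inv ((1 + ‖lam • p‖) ^ 4) ‖lam • p‖]
              have hinv : s⁻¹ ≤ ‖p‖⁻¹ := inv_anti₀ hps hs_ge
              calc lam ^ 4 * (C * ((1 + ‖lam • p‖) ^ 4)⁻¹) * s⁻¹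
                  ≤ lam ^ 4 * (C * ((1 + ‖lam • p‖) ^ 4)⁻¹) * ‖p‖⁻¹ :=
                    mul_le_mul_of_nonneg_left hinv (by positivity)
                _ = lam ^ 5 * (C * (((1 + ‖lam • p‖) ^ 4)⁻¹ * ‖lam • p‖⁻¹)) := by
                    rw [hn, mul_inv]
                    field_simp
    _ = lam ^ 2 * M := by
        rw [integral_const_mul, Measure.integral_comp_smul_of_nonneg volume B lam (hR := hlam.le),
          finrank_euclideanSpace_fin, smul_eq_mul, ← hM]
        field_simp

end Auxiliary

/-- Theorem 3.2, main result: If the spectral measure `ρ` on `[0,∞)` is finite,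
then for every real `ω > 2` and every Schwartz `f` on ℝ⁴ we have
`λ^ω W_{ρ,λ}(f) → 0` as `λ → 0⁺`; consequently the Steinmann scaling degree of `W_ρ`
(the infimum of the set of `ω` for which all these limits vanish) is at most `2`, so the
singularity hypothesis `sd(W_ρ) > 2` fails. -/
theorem kl_scaling_degree_le_two_of_finite (ρ : Measure ℝ) [IsFiniteMeasure ρ] :
    (∀ ω : ℝ, 2 < ω → ∀ f : 𝓢(EuclideanSpace ℝ (Fin 4), ℂ),
      Tendsto (fun lam : ℝ => ((lam ^ ω : ℝ) : ℂ) * KLscaled ρ lam ⇑f)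
        (𝓝[>] (0 : ℝ)) (𝓝 0)) ∧
    sInf {ω : ℝ | ∀ f : 𝓢(EuclideanSpace ℝ (Fin 4), ℂ),
        Tendsto (fun lam : ℝ => ((lam ^ ω : ℝ) : ℂ) * KLscaled ρ lam ⇑f)
          (𝓝[>] (0 : ℝ)) (𝓝 0)} ≤ 2 := by
  have main : ∀ ω : ℝ, 2 < ω → ∀ f : 𝓢(EuclideanSpace ℝ (Fin 4), ℂ),
      Tendsto (fun lam : ℝ => ((lam ^ ω : ℝ) : ℂ) * KLscaled ρ lam ⇑f)
        (𝓝[>] (0 : ℝ)) (𝓝 0) := by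
    intro ω hω f
    obtain ⟨M, hM, hbound⟩ := KLinner_bound f
    set K := M * (ρ (Set.Ici (0:ℝ))).toReal with hK
    have hKnn : 0 ≤ K := mul_nonneg hM ENNReal.toReal_nonneg
    have hKL : ∀ lam : ℝ, 0 < lam →
        ‖KL ρ (fun x => f (lam⁻¹ • x))‖ ≤ lam ^ 2 * K := by
      intro lam hlam
      calc ‖KL ρ (fun x => f (lam⁻¹ • x))‖
          ≤ ∫ m2 in Set.Ici (0:ℝ), ‖KLinner (fun x => f (lam⁻¹ • x)) m2‖ ∂ρ := by
            rw [KL]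
            exact norm_integral_le_integral_norm _
        _ ≤ ∫ _m2 in Set.Ici (0:ℝ), lam ^ 2 * M ∂ρ := by
            refine integral_mono_of_nonneg
              (Eventually.of_forall fun m2 => norm_nonneg _) (integrable_const _) ?_
            exact (ae_restrict_iff' measurableSet_Ici).2
              (Eventually.of_forall fun m2 hm2 => hbound lam hlam m2 hm2)
        _ = (ρ (Set.Ici (0:ℝ))).toReal * (lam ^ 2 * M) := by
            rw [setIntegral_const, smul_eq_mul, measureReal_def]
        _ = lam ^ 2 * K := by rw [hK]; ring
    have hev : ∀ᶠ lam in 𝓝[>] (0:ℝ),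
        ‖((lam ^ ω : ℝ) : ℂ) * KLscaled ρ lam ⇑f‖ ≤ lam ^ (ω - 2) * K := by
      refine eventually_mem_nhdsWithin.mono fun lam hlam => ?_
      have hl : (0:ℝ) < lam := hlam
      have h1 : ‖KLscaled ρ lam ⇑f‖
          = (lam ^ 4)⁻¹ * ‖KL ρ (fun x => f (lam⁻¹ • x))‖ := by
        rw [KLscaled, norm_mul, Complex.norm_real, Real.norm_eq_abs,
          abs_of_nonneg (by positivity)]
      have h2 : ‖((lam ^ ω : ℝ) : ℂ) * KLscaled ρ lam ⇑f‖
          = lam ^ ω * ((lam ^ 4)⁻¹ * ‖KL ρ (fun x => f (lam⁻¹ • x))‖) := by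
        rw [norm_mul, Complex.norm_real, Real.norm_eq_abs,
          abs_of_nonneg (Real.rpow_nonneg hl.le ω), h1]
      rw [h2]
      calc lam ^ ω * ((lam ^ 4)⁻¹ * ‖KL ρ (fun x => f (lam⁻¹ • x))‖)
          ≤ lam ^ ω * ((lam ^ 4)⁻¹ * (lam ^ 2 * K)) := by
            gcongr
            exact hKL lam hl
        _ = lam ^ (ω - 2) * K := by
            rw [Real.rpow_sub hl, div_eq_mul_inv,
              show lam ^ (2:ℝ) = lam ^ (2:ℕ) by
                rw [show ((2:ℝ)) = ((2:ℕ):ℝ) by norm_num, Real.rpow_natCast]]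
            field_simp
    have hg0 : Tendsto (fun lam : ℝ => lam ^ (ω - 2) * K) (𝓝[>] (0:ℝ)) (𝓝 0) := by
      have hc : ContinuousAt (fun x : ℝ => x ^ (ω - 2)) 0 :=
        Real.continuousAt_rpow_const 0 (ω - 2) (Or.inr (by linarith))
      have h := hc.tendsto
      rw [Real.zero_rpow (by linarith : ω - 2 ≠ 0)] at h
      simpa using ((h.mono_left nhdsWithin_le_nhds).mul_const K)
    rw [tendsto_zero_iff_norm_tendsto_zero]
    exact squeeze_zero' (Eventually.of_forall fun _ => norm_nonneg _) hev hg0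
  refine ⟨main, ?_⟩
  by_cases hb : BddBelow {ω : ℝ | ∀ f : 𝓢(EuclideanSpace ℝ (Fin 4), ℂ),
      Tendsto (fun lam : ℝ => ((lam ^ ω : ℝ) : ℂ) * KLscaled ρ lam ⇑f)
        (𝓝[>] (0 : ℝ)) (𝓝 0)}
  · refine le_of_forall_pos_le_add fun ε hε => ?_
    exact csInf_le hb (main (2 + ε) (by linarith))
  · rw [Real.sInf_of_not_bddBelow hb]
    norm_num
end

section
/- (Corollary 3.2: the singularity hypothesis is incompatible with the ETCR.) Let ρ be a positive Borel measure on [0,∞) with total mass ρ([0,∞)) = 1 (the normalization ∫ dρ(m²) = 1 forced by the equal-time canonical commutation relations). Then for every real ω > 2 and every Schwartz function f on ℝ⁴, λ^ω W_{ρ,λ}(f) → 0 as λ → 0⁺; i.e. sd(W_ρ) ≤ 2 and the singularity hypothesis fails. Moreover the atom Z = ρ({m²}) at any point m² satisfies Z ≤ 1. -/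
open MeasureTheory Filter Topology SchwartzMap
open scoped FourierTransform

open Set
open scoped RealInnerProductSpace

noncomputable def h1 (t : ℝ) : ℝ := |t| ^ (-(1/3) : ℝ) * (1 + |t|) ^ (-(3:ℝ))

lemma h1_nonneg (t : ℝ) : 0 ≤ h1 t := by
  unfold h1; positivity

lemma h1_meas : Measurable h1 := by
  unfold h1; fun_prop

lemma h1_integrable : Integrable h1 := by
  have hIoo : IntegrableOn h1 (Ioo (0:ℝ) 1) := by
    refine Integrable.mono' ((intervalIntegral.integrableOn_Ioo_rpow_iff one_pos).2 (by norm_num : (-1:ℝ) < -(1/3))) h1_meas.aestronglyMeasurable.restrict ?_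
    filter_upwards [ae_restrict_mem measurableSet_Ioo] with t ht
    rw [Real.norm_eq_abs, abs_of_nonneg (h1_nonneg t)]
    unfold h1
    rw [abs_of_pos ht.1]
    calc t ^ (-(1/3):ℝ) * (1 + t) ^ (-(3:ℝ)) ≤ t ^ (-(1/3):ℝ) * 1 := by
          have h1t : (1 + t) ^ (-(3:ℝ)) ≤ 1 :=
            Real.rpow_le_one_of_one_le_of_nonpos (by linarith [ht.1.le]) (by norm_num)
          have := Real.rpow_nonneg ht.1.le (-(1/3):ℝ)
          nlinarith [Real.rpow_nonneg (by linarith [ht.1.le] : (0:ℝ) ≤ 1+t) (-(3:ℝ))]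
      _ = t ^ (-(1/3):ℝ) := mul_one _
  have hIoi : IntegrableOn h1 (Ici (1:ℝ)) := by
    rw [integrableOn_Ici_iff_integrableOn_Ioi]
    refine Integrable.mono' (integrableOn_Ioi_rpow_of_lt (by norm_num : (-(10/3):ℝ) < -1) one_pos) h1_meas.aestronglyMeasurable.restrict ?_
    filter_upwards [ae_restrict_mem measurableSet_Ioi] with t ht
    have ht0 : (0:ℝ) < t := lt_trans one_pos ht
    rw [Real.norm_eq_abs, abs_of_nonneg (h1_nonneg t)]
    unfold h1
    rw [abs_of_pos ht0]
    have : (1 + t) ^ (-(3:ℝ)) ≤ t ^ (-(3:ℝ)) :=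
      Real.rpow_le_rpow_of_nonpos ht0 (by linarith) (by norm_num)
    calc t ^ (-(1/3):ℝ) * (1 + t) ^ (-(3:ℝ)) ≤ t ^ (-(1/3):ℝ) * t ^ (-(3:ℝ)) := by
          have := Real.rpow_nonneg ht0.le (-(1/3):ℝ)
          nlinarith
      _ = t ^ ((-(10/3)):ℝ) := by
          rw [← Real.rpow_add ht0]; norm_num
  have hIci : IntegrableOn h1 (Ici (0:ℝ)) := by
    have : Ici (0:ℝ) = Ioo 0 1 ∪ Ici 1 ∪ {0} := by
      ext x; simp only [mem_union, mem_Ioo, mem_Ici, mem_singleton_iff]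
      constructor
      · rintro hx
        rcases eq_or_lt_of_le hx with h | h
        · exact Or.inr h.symm
        · rcases lt_or_ge x 1 with h1 | h1
          · exact Or.inl (Or.inl ⟨h, h1⟩)
          · exact Or.inl (Or.inr h1)
      · rintro (⟨h, _⟩ | h | rfl) <;> first | exact le_of_lt h | linarith | rfl
    rw [this]
    exact ((hIoo.union hIoi).union ((integrableOn_singleton_iff (f := h1) (x := 0)).2 (Or.inl (by simp [h1]))))
  have hIic : IntegrableOn h1 (Iic (0:ℝ)) := by
    have hmap : (volume.restrict (Ici (0:ℝ))).map Neg.neg = volume.restrict (Iic (0:ℝ)) := by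
      conv => rhs; rw [← Measure.map_neg_eq_self (volume : Measure ℝ), measurableEmbedding_neg.restrict_map]
      simp
    rw [IntegrableOn, ← hmap, measurableEmbedding_neg.integrable_map_iff]
    have : h1 ∘ Neg.neg = h1 := by
      funext t; simp [h1, Function.comp, abs_neg]
    rwa [this]
  rw [← integrableOn_univ, ← Set.Iic_union_Ici (a := (0:ℝ))]
  exact hIic.union hIci

noncomputable def hlam (lam t : ℝ) : ℝ := |t| ^ (-(1/3) : ℝ) * (1 + lam * |t|) ^ (-(3:ℝ))

lemma hlam_nonneg {lam : ℝ} (hl : 0 ≤ lam) (t : ℝ) : 0 ≤ hlam lam t := by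
  unfold hlam
  have h1 : (0:ℝ) ≤ 1 + lam * |t| := by positivity
  exact mul_nonneg (Real.rpow_nonneg (abs_nonneg t) _) (Real.rpow_nonneg h1 _)

lemma hlam_eq {lam : ℝ} (hl : 0 < lam) :
    hlam lam = fun t => lam ^ ((1:ℝ)/3) * h1 (lam * t) := by
  funext t
  have hunit : lam ^ ((1:ℝ)/3) * lam ^ (-(1/3) : ℝ) = 1 := by
    rw [← Real.rpow_add hl]; norm_num
  unfold hlam h1
  rw [abs_mul, abs_of_pos hl, Real.mul_rpow hl.le (abs_nonneg t)]
  linear_combination (-(|t| ^ (-(1/3):ℝ) * (1 + lam * |t|) ^ (-(3:ℝ)))) * hunit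

lemma hlam_integrable {lam : ℝ} (hl : 0 < lam) : Integrable (hlam lam) := by
  rw [hlam_eq hl]
  exact (h1_integrable.comp_mul_left' hl.ne').const_mul _

lemma hlam_integral {lam : ℝ} (hl : 0 < lam) :
    ∫ t, hlam lam t = lam ^ ((1:ℝ)/3) * lam⁻¹ * ∫ t, h1 t := by
  rw [hlam_eq hl, integral_const_mul, Measure.integral_comp_mul_left h1 lam,
    abs_of_pos (inv_pos.2 hl), smul_eq_mul]
  ring

lemma prod_hlam_integrable {lam : ℝ} (hl : 0 < lam) :
    Integrable (fun p : EuclideanSpace ℝ (Fin 3) => ∏ i, hlam lam (p i)) := by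
  have h : Integrable (fun x : Fin 3 → ℝ => ∏ i, hlam lam (x i)) :=
    Integrable.fintype_prod (f := fun _ : Fin 3 => hlam lam) (fun _ => hlam_integrable hl)
  exact ((EuclideanSpace.volume_preserving_symm_measurableEquiv_toLp (Fin 3)).integrable_comp_emb
    (MeasurableEquiv.toLp 2 (Fin 3 → ℝ)).symm.measurableEmbedding).2 h

lemma prod_hlam_integral {lam : ℝ} (hl : 0 < lam) :
    ∫ p : EuclideanSpace ℝ (Fin 3), ∏ i, hlam lam (p i) = (∫ t, hlam lam t) ^ 3 := by
  have h := (EuclideanSpace.volume_preserving_symm_measurableEquiv_toLp (Fin 3)).integral_comp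
    (MeasurableEquiv.toLp 2 (Fin 3 → ℝ)).symm.measurableEmbedding
    (fun x : Fin 3 → ℝ => ∏ i, hlam lam (x i))
  rw [show (fun p : EuclideanSpace ℝ (Fin 3) => ∏ i, hlam lam (p i))
      = fun p : EuclideanSpace ℝ (Fin 3) =>
        (fun x : Fin 3 → ℝ => ∏ i, hlam lam (x i)) ((MeasurableEquiv.toLp 2 (Fin 3 → ℝ)).symm p)
    from rfl, h, integral_fintype_prod_volume_eq_pow (ι := Fin 3) (hlam lam), Fintype.card_fin]

lemma timeSpace_zero (a : ℝ) (p : EuclideanSpace ℝ (Fin 3)) : timeSpace a p 0 = a := rfl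

lemma timeSpace_succ (a : ℝ) (p : EuclideanSpace ℝ (Fin 3)) (j : Fin 3) :
    timeSpace a p j.succ = p j := rfl

lemma norm_sq_timeSpace (a : ℝ) (p : EuclideanSpace ℝ (Fin 3)) :
    ‖timeSpace a p‖ ^ 2 = a ^ 2 + ‖p‖ ^ 2 := by
  rw [EuclideanSpace.norm_eq, EuclideanSpace.norm_eq,
    Real.sq_sqrt (by positivity), Real.sq_sqrt (by positivity)]
  rw [Fin.sum_univ_succ]
  simp [timeSpace_zero, timeSpace_succ, Real.norm_eq_abs, sq_abs]

lemma norm_le_norm_timeSpace_s10 (a : ℝ) (p : EuclideanSpace ℝ (Fin 3)) :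
    ‖p‖ ≤ ‖timeSpace a p‖ := by
  have h := norm_sq_timeSpace a p
  nlinarith [norm_nonneg p, norm_nonneg (timeSpace a p), sq_nonneg a]

lemma abs_coord_le_norm (p : EuclideanSpace ℝ (Fin 3)) (i : Fin 3) : |p i| ≤ ‖p‖ := by
  have h : |p i| ^ 2 ≤ ‖p‖ ^ 2 := by
    rw [EuclideanSpace.norm_eq, Real.sq_sqrt (by positivity)]
    have := Finset.single_le_sum (f := fun j => ‖p j‖ ^ 2)
      (fun j _ => by positivity) (Finset.mem_univ i)
    simpa [sq_abs] using this
  nlinarith [abs_nonneg (p i), norm_nonneg p]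

lemma fourier_scale_s10 (f : EuclideanSpace ℝ (Fin 4) → ℂ) {lam : ℝ} (hl : 0 < lam)
    (y : EuclideanSpace ℝ (Fin 4)) :
    𝓕 (fun x => f (lam⁻¹ • x)) y = ((lam ^ (4:ℕ) : ℝ) : ℂ) • 𝓕 f (lam • y) := by
  rw [Real.fourier_eq, Real.fourier_eq]
  have key : ∀ x : EuclideanSpace ℝ (Fin 4),
      (𝐞 (-⟪x, y⟫) : Circle) • f (lam⁻¹ • x)
        = (fun u => (𝐞 (-⟪u, lam • y⟫) : Circle) • f u) (lam⁻¹ • x) := by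
    intro x
    simp only []
    congr 2
    rw [real_inner_smul_right, real_inner_smul_left, ← mul_assoc, mul_comm lam,
      inv_mul_cancel₀ hl.ne', one_mul]
  simp_rw [key]
  rw [show (fun x : EuclideanSpace ℝ (Fin 4) =>
      (fun u => (𝐞 (-⟪u, lam • y⟫) : Circle) • f u) (lam⁻¹ • x))
    = fun x => (fun u => (𝐞 (-⟪u, lam • y⟫) : Circle) • f u) (lam⁻¹ • x) from rfl]
  rw [Measure.integral_comp_smul volume (fun u => (𝐞 (-⟪u, lam • y⟫) : Circle) • f u) lam⁻¹]
  have hrank : Module.finrank ℝ (EuclideanSpace ℝ (Fin 4)) = 4 := by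
    simp [finrank_euclideanSpace]
  rw [hrank]
  have : |((lam⁻¹ : ℝ) ^ 4)⁻¹| = (lam ^ (4:ℕ) : ℝ) := by
    rw [← inv_pow, inv_inv, abs_of_pos (by positivity)]
  rw [this, Complex.real_smul, Complex.ofReal_pow]
  norm_num

lemma coord_zero_null (i : Fin 3) :
    (volume : Measure (EuclideanSpace ℝ (Fin 3))) {p | p i = 0} = 0 := by
  set φ : EuclideanSpace ℝ (Fin 3) →ₗ[ℝ] ℝ :=
    (LinearMap.proj i).comp (WithLp.linearEquiv 2 ℝ (Fin 3 → ℝ)).toLinearMap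
  have : {p : EuclideanSpace ℝ (Fin 3) | p i = 0} = (LinearMap.ker φ : Set _) := rfl
  rw [this]
  apply Measure.addHaar_submodule
  intro h
  have h1 : (EuclideanSpace.single i (1:ℝ)) ∈ LinearMap.ker φ := h ▸ Submodule.mem_top
  simp only [LinearMap.mem_ker, φ, LinearMap.comp_apply, LinearMap.proj_apply] at h1
  simpa using h1

lemma ae_coords_ne_zero :
    ∀ᵐ p : EuclideanSpace ℝ (Fin 3), ∀ i, p i ≠ 0 := by
  have : ∀ i : Fin 3, ∀ᵐ p : EuclideanSpace ℝ (Fin 3), p i ≠ 0 := by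
    intro i
    rw [ae_iff]
    simpa using coord_zero_null i
  simpa [eventually_all] using (ae_all_iff.2 this)

lemma exists_decay (f : 𝓢(EuclideanSpace ℝ (Fin 4), ℂ)) :
    ∃ D : ℝ, 0 ≤ D ∧ ∀ y, ‖𝓕 (⇑f) y‖ * (1 + ‖y‖) ^ (9:ℕ) ≤ D := by
  set g := SchwartzMap.fourierTransformCLM ℝ f with hg
  set M : ℝ := 2 ^ 9 * (Finset.Iic ((9,0) : ℕ × ℕ)).sup
      (fun m => SchwartzMap.seminorm ℝ m.1 m.2) g with hM
  have key : ∀ y, ‖𝓕 (⇑f) y‖ * (1 + ‖y‖) ^ (9:ℕ) ≤ M := by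
    intro y
    have h := SchwartzMap.one_add_le_sup_seminorm_apply (𝕜 := ℝ) (m := ((9,0) : ℕ × ℕ))
      le_rfl le_rfl g y
    rw [norm_iteratedFDeriv_zero] at h
    have hgy : g y = 𝓕 (⇑f) y := by rw [hg, SchwartzMap.fourierTransformCLM_apply, SchwartzMap.fourier_coe]
    rw [hgy] at h
    calc ‖𝓕 (⇑f) y‖ * (1 + ‖y‖) ^ (9:ℕ) = (1 + ‖y‖) ^ (9:ℕ) * ‖𝓕 (⇑f) y‖ := by ring
      _ ≤ _ := h
  refine ⟨max M 0, le_max_right _ _, fun y => (key y).trans (le_max_left _ _)⟩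

lemma rpow_neg_three {x : ℝ} (hx : 0 ≤ x) : x ^ (-(3:ℝ)) = (x ^ (3:ℕ))⁻¹ := by
  rw [Real.rpow_neg hx, ← Real.rpow_natCast x 3]; norm_num

lemma KLinner_bound_s10 (f : 𝓢(EuclideanSpace ℝ (Fin 4), ℂ)) {D : ℝ} (hD0 : 0 ≤ D)
    (hD : ∀ y, ‖𝓕 (⇑f) y‖ * (1 + ‖y‖) ^ (9:ℕ) ≤ D) {lam : ℝ} (hl : 0 < lam)
    {m2 : ℝ} (hm2 : 0 ≤ m2) :
    ‖KLinner (fun x => f (lam⁻¹ • x)) m2‖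
      ≤ (lam ^ (4:ℕ)) * D * (∫ t, hlam lam t) ^ 3 := by
  unfold KLinner
  have hb : Integrable (fun p : EuclideanSpace ℝ (Fin 3) =>
      (lam ^ (4:ℕ)) * D * ∏ i, hlam lam (p i)) := (prod_hlam_integrable hl).const_mul _
  refine (norm_integral_le_of_norm_le hb ?_).trans_eq ?_
  swap
  · rw [integral_const_mul, prod_hlam_integral hl]
  filter_upwards [ae_coords_ne_zero] with p hp
  set a := Real.sqrt (‖p‖ ^ 2 + m2) with ha_def
  set y := timeSpace a p with hy_def
  have hpnorm : 0 < ‖p‖ := lt_of_lt_of_le (abs_pos.2 (hp 0)) (abs_coord_le_norm p 0)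
  have hpa : ‖p‖ ≤ a := by
    rw [ha_def]
    calc ‖p‖ = Real.sqrt (‖p‖ ^ 2) := by rw [Real.sqrt_sq (norm_nonneg p)]
      _ ≤ _ := Real.sqrt_le_sqrt (by linarith)
  have ha0 : 0 < a := lt_of_lt_of_le hpnorm hpa
  have hpy : ‖p‖ ≤ ‖y‖ := norm_le_norm_timeSpace_s10 a p
  have hy0 : (0:ℝ) < 1 + lam * ‖y‖ := by positivity
  -- rewrite the norm
  rw [norm_div, fourier_scale_s10 (⇑f) hl y, norm_smul]
  have hnorm_a : ‖((a:ℝ) : ℂ)‖ = a := by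
    rw [Complex.norm_real, Real.norm_eq_abs, abs_of_pos ha0]
  have hnorm_l : ‖((lam ^ (4:ℕ) : ℝ) : ℂ)‖ = lam ^ (4:ℕ) := by
    rw [Complex.norm_real, Real.norm_eq_abs, abs_of_pos (by positivity)]
  rw [hnorm_a, hnorm_l]
  -- decay bound
  have hdecay : ‖𝓕 (⇑f) (lam • y)‖ ≤ D / (1 + lam * ‖y‖) ^ (9:ℕ) := by
    rw [le_div_iff₀ (by positivity)]
    have := hD (lam • y)
    rwa [norm_smul, Real.norm_eq_abs, abs_of_pos hl] at this
  -- the product lower bound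
  have hAB : ∏ i, hlam lam (p i)
      = ((∏ i : Fin 3, |p i| ^ ((1:ℝ)/3)) * ∏ i : Fin 3, (1 + lam * |p i|) ^ (3:ℕ))⁻¹ := by
    rw [mul_inv, ← Finset.prod_inv_distrib, ← Finset.prod_inv_distrib,
      ← Finset.prod_mul_distrib]
    refine Finset.prod_congr rfl fun i _ => ?_
    unfold hlam
    rw [rpow_neg_three (by positivity), ← Real.rpow_neg (abs_nonneg _)]
  have hApos : 0 < ∏ i : Fin 3, |p i| ^ ((1:ℝ)/3) :=
    Finset.prod_pos fun i _ => Real.rpow_pos_of_pos (abs_pos.2 (hp i)) _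
  have hBpos : 0 < ∏ i : Fin 3, (1 + lam * |p i|) ^ (3:ℕ) :=
    Finset.prod_pos fun i _ => by positivity
  have hA : ∏ i : Fin 3, |p i| ^ ((1:ℝ)/3) ≤ a := by
    calc ∏ i : Fin 3, |p i| ^ ((1:ℝ)/3) ≤ ∏ i : Fin 3, ‖p‖ ^ ((1:ℝ)/3) :=
          Finset.prod_le_prod (fun i _ => Real.rpow_nonneg (abs_nonneg _) _)
            (fun i _ => Real.rpow_le_rpow (abs_nonneg _) (abs_coord_le_norm p i) (by norm_num))
      _ = (‖p‖ ^ ((1:ℝ)/3)) ^ (3:ℕ) := by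
          rw [Finset.prod_const]; norm_num
      _ = ‖p‖ := by
          rw [← Real.rpow_natCast (‖p‖ ^ ((1:ℝ)/3)) 3, ← Real.rpow_mul (norm_nonneg p)]
          norm_num
      _ ≤ a := hpa
  have hB : ∏ i : Fin 3, (1 + lam * |p i|) ^ (3:ℕ) ≤ (1 + lam * ‖y‖) ^ (9:ℕ) := by
    calc ∏ i : Fin 3, (1 + lam * |p i|) ^ (3:ℕ) ≤ ∏ i : Fin 3, (1 + lam * ‖y‖) ^ (3:ℕ) :=
          Finset.prod_le_prod (fun i _ => by positivity)
            (fun i _ => pow_le_pow_left₀ (by positivity)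
              (by nlinarith [le_trans (abs_coord_le_norm p i) hpy]) _)
      _ = ((1 + lam * ‖y‖) ^ (3:ℕ)) ^ (3:ℕ) := by rw [Finset.prod_const]; norm_num
      _ = (1 + lam * ‖y‖) ^ (9:ℕ) := by rw [← pow_mul]
  calc lam ^ (4:ℕ) * ‖𝓕 (⇑f) (lam • y)‖ / a
      ≤ lam ^ (4:ℕ) * (D / (1 + lam * ‖y‖) ^ (9:ℕ)) / a := by gcongr
    _ = lam ^ (4:ℕ) * D * ((1 + lam * ‖y‖) ^ (9:ℕ) * a)⁻¹ := by
        field_simp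
    _ ≤ lam ^ (4:ℕ) * D * ((∏ i : Fin 3, |p i| ^ ((1:ℝ)/3))
          * ∏ i : Fin 3, (1 + lam * |p i|) ^ (3:ℕ))⁻¹ := by
        have hle : (∏ i : Fin 3, |p i| ^ ((1:ℝ)/3))
            * ∏ i : Fin 3, (1 + lam * |p i|) ^ (3:ℕ) ≤ (1 + lam * ‖y‖) ^ (9:ℕ) * a := by
          rw [mul_comm ((1 + lam * ‖y‖) ^ (9:ℕ))]
          exact mul_le_mul hA hB hBpos.le ha0.le
        exact mul_le_mul_of_nonneg_left
          (inv_anti₀ (mul_pos hApos hBpos) hle) (by positivity)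
    _ = lam ^ (4:ℕ) * D * ∏ i, hlam lam (p i) := by rw [hAB]

lemma KL_bound (ρ : Measure ℝ) (hnorm : ρ (Set.Ici (0 : ℝ)) = 1)
    (f : 𝓢(EuclideanSpace ℝ (Fin 4), ℂ)) {D : ℝ} (hD0 : 0 ≤ D)
    (hD : ∀ y, ‖𝓕 (⇑f) y‖ * (1 + ‖y‖) ^ (9:ℕ) ≤ D) {lam : ℝ} (hl : 0 < lam) :
    ‖KL ρ (fun x => f (lam⁻¹ • x))‖ ≤ lam ^ (2:ℕ) * (D * (∫ t, h1 t) ^ 3) := by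
  have hfin : IsFiniteMeasure (ρ.restrict (Set.Ici 0)) := by
    constructor
    rw [Measure.restrict_apply_univ, hnorm]
    exact ENNReal.one_lt_top
  have step1 : ‖KL ρ (fun x => f (lam⁻¹ • x))‖
      ≤ (lam ^ (4:ℕ)) * D * (∫ t, hlam lam t) ^ 3 := by
    unfold KL
    refine (norm_integral_le_of_norm_le (integrable_const ((lam ^ (4:ℕ)) * D * (∫ t, hlam lam t) ^ 3)) ?_).trans_eq ?_
    · filter_upwards [ae_restrict_mem measurableSet_Ici] with m2 hm2
      exact KLinner_bound_s10 f hD0 hD hl hm2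
    · rw [integral_const, smul_eq_mul, measureReal_restrict_apply_univ, measureReal_def, hnorm,
        ENNReal.toReal_one, one_mul]
  refine step1.trans_eq ?_
  rw [hlam_integral hl]
  have h13 : (lam ^ ((1:ℝ)/3)) ^ (3:ℕ) = lam := by
    rw [← Real.rpow_natCast (lam ^ ((1:ℝ)/3)) 3, ← Real.rpow_mul hl.le]
    norm_num
  rw [mul_pow, mul_pow, h13]
  field_simp

/-- Corollary 3.2: If the spectral measure `ρ` on `[0,∞)` has total mass `1`
(the ETCR sum rule `∫ dρ(m²) = 1`), then for every `ω > 2` and every Schwartz `f` on ℝ⁴,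
`λ^ω W_{ρ,λ}(f) → 0` as `λ → 0⁺` (i.e. `sd(W_ρ) ≤ 2`, the singularity hypothesis fails);
moreover every atom `Z = ρ({m²})` satisfies `Z ≤ 1`. -/
theorem etcr_excludes_singularity (ρ : Measure ℝ)
    (hnorm : ρ (Set.Ici (0 : ℝ)) = 1) :
    (∀ ω : ℝ, 2 < ω → ∀ f : 𝓢(EuclideanSpace ℝ (Fin 4), ℂ),
      Tendsto (fun lam : ℝ => ((lam ^ ω : ℝ) : ℂ) * KLscaled ρ lam ⇑f)
        (𝓝[>] (0 : ℝ)) (𝓝 0)) ∧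
    ∀ msq : ℝ, 0 ≤ msq → ρ {msq} ≤ 1 := by
  constructor
  · intro ω hω f
    obtain ⟨D, hD0, hD⟩ := exists_decay f
    set C := ∫ t, h1 t with hC
    have hC0 : 0 ≤ C := integral_nonneg h1_nonneg
    apply squeeze_zero_norm' (a := fun lam => (D * C ^ 3) * lam ^ (ω - 2))
    · filter_upwards [self_mem_nhdsWithin] with lam hlam'
      replace hlam' : 0 < lam := hlam'
      have hKL := KL_bound ρ hnorm f hD0 hD hlam'
      have hrw : ‖((lam ^ ω : ℝ) : ℂ) * KLscaled ρ lam ⇑f‖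
          = lam ^ ω * ((lam ^ (4:ℕ))⁻¹ * ‖KL ρ (fun x => ⇑f (lam⁻¹ • x))‖) := by
        unfold KLscaled
        rw [norm_mul, norm_mul, Complex.norm_real, Complex.norm_real, Real.norm_eq_abs,
          Real.norm_eq_abs, abs_of_nonneg (Real.rpow_nonneg hlam'.le ω),
          abs_of_nonneg (inv_nonneg.2 (by positivity))]
      rw [hrw]
      calc lam ^ ω * ((lam ^ (4:ℕ))⁻¹ * ‖KL ρ (fun x => ⇑f (lam⁻¹ • x))‖)
          ≤ lam ^ ω * ((lam ^ (4:ℕ))⁻¹ * (lam ^ (2:ℕ) * (D * C ^ 3))) := by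
            have h1 : (0:ℝ) ≤ lam ^ ω := Real.rpow_nonneg hlam'.le ω
            have h2 : (0:ℝ) ≤ (lam ^ (4:ℕ))⁻¹ := by positivity
            exact mul_le_mul_of_nonneg_left (mul_le_mul_of_nonneg_left hKL h2) h1
        _ = (D * C ^ 3) * lam ^ (ω - 2) := by
            rw [Real.rpow_sub hlam', show (2:ℝ) = ((2:ℕ):ℝ) by norm_num,
              Real.rpow_natCast]
            field_simp
    · have h0 : Tendsto (fun lam : ℝ => lam ^ (ω - 2)) (𝓝[>] (0:ℝ)) (𝓝 0) := by
        have hcont := (Real.continuousAt_rpow_const 0 (ω - 2)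
          (Or.inr (by linarith))).tendsto
        rw [Real.zero_rpow (by linarith : ω - 2 ≠ 0)] at hcont
        exact hcont.mono_left nhdsWithin_le_nhds
      simpa using h0.const_mul (D * C ^ 3)
  · intro msq hmsq
    exact le_trans (measure_mono (by simpa using hmsq)) hnorm.le
end
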